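/- arXiv:2411.06941 — 8 statements merged into one kernel-verified Lean document; each statement's English description precedes it below -/
import Mathlib

section
/- For every finite simple graph G on n ≥ 1 vertices with at least one edge and every integer d ≥ 0, the d-improper chromatic number satisfies χ^d(G) ≥ (λ₁ − λₙ)/(d − λₙ) = 1 − (λ₁ − d)/(λₙ − d). (Note that having an edge forces λₙ ≤ −1 < 0 ≤ d, so d − λₙ > 0.) -/
open Matrix Finset

private lemma dot_sum {n : ℕ} {ι : Type*} (s : Finset ι) (v : Fin n → ℝ) (f : ι → Fin n → ℝ) :
    v ⬝ᵥ (∑ j ∈ s, f j) = ∑ j ∈ s, v ⬝ᵥ f j := by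
  simp only [dotProduct, Finset.sum_apply, Finset.mul_sum]
  exact Finset.sum_comm

private lemma dot_expand {n : ℕ} (A : Matrix (Fin n) (Fin n) ℝ) (v w : Fin n → ℝ) :
    v ⬝ᵥ A *ᵥ w = ∑ i, ∑ j, v i * A i j * w j := by
  simp [dotProduct, Matrix.mulVec, Finset.mul_sum, mul_assoc]

private lemma dot_symm {n : ℕ} {A : Matrix (Fin n) (Fin n) ℝ} (hA : Aᵀ = A) (v w : Fin n → ℝ) :
    v ⬝ᵥ A *ᵥ w = w ⬝ᵥ A *ᵥ v := by
  rw [dot_expand, dot_expand, Finset.sum_comm]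
  refine Finset.sum_congr rfl fun i _ => Finset.sum_congr rfl fun j _ => ?_
  have h : A j i = A i j := by rw [← Matrix.transpose_apply A i j, hA]
  rw [h]; ring

private lemma rayleigh_lower {n : ℕ} {A : Matrix (Fin n) (Fin n) ℝ} (hA : A.IsHermitian)
    (lo : ℝ) (hlo : ∀ i, lo ≤ hA.eigenvalues i) (v : Fin n → ℝ) :
    lo * (v ⬝ᵥ v) ≤ v ⬝ᵥ A *ᵥ v := by
  classical
  set u : Fin n → (Fin n → ℝ) := fun i => ⇑(hA.eigenvectorBasis i) with hu
  set c : Fin n → ℝ := fun i => u i ⬝ᵥ v with hc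
  have h2 : ∀ i, (inner ℝ (hA.eigenvectorBasis i) (WithLp.toLp 2 v) : ℝ) = c i := by
    intro i
    simp [hc, hu, PiLp.inner_apply, RCLike.inner_apply, dotProduct]
    exact Finset.sum_congr rfl fun _ _ => mul_comm _ _
  have hrepr : v = ∑ i, c i • u i := by
    have h := (hA.eigenvectorBasis).sum_repr' (WithLp.toLp 2 v)
    have h3 := congrArg WithLp.ofLp h
    rw [WithLp.ofLp_sum] at h3
    simp only [WithLp.ofLp_smul, h2] at h3
    exact h3.symm
  have hmv : A *ᵥ v = ∑ i, (c i * hA.eigenvalues i) • u i := by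
    conv_lhs => rw [hrepr]
    rw [show A *ᵥ ∑ i, c i • u i = ∑ i, A *ᵥ (c i • u i) from map_sum A.mulVecLin _ _]
    refine Finset.sum_congr rfl fun i _ => ?_
    rw [Matrix.mulVec_smul, hA.mulVec_eigenvectorBasis i]
    rw [smul_smul, mul_comm]
  have hdotu : ∀ i, v ⬝ᵥ u i = c i := fun i => dotProduct_comm v (u i)
  have hq : v ⬝ᵥ A *ᵥ v = ∑ i, hA.eigenvalues i * (c i)^2 := by
    rw [hmv, dot_sum]
    refine Finset.sum_congr rfl fun i _ => ?_
    rw [dotProduct_smul, smul_eq_mul, hdotu i]; ring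
  have hnorm : v ⬝ᵥ v = ∑ i, (c i)^2 := by
    conv_lhs => rw [show v ⬝ᵥ v = v ⬝ᵥ ∑ i, c i • u i from by rw [← hrepr]]
    rw [dot_sum]
    refine Finset.sum_congr rfl fun i _ => ?_
    rw [dotProduct_smul, smul_eq_mul, hdotu i]; ring
  rw [hq, hnorm, Finset.mul_sum]
  refine Finset.sum_le_sum fun i _ => ?_
  nlinarith [hlo i, sq_nonneg (c i)]

private lemma class_bound {n k : ℕ} (G : SimpleGraph (Fin n)) [DecidableRel G.Adj]
    (d : ℕ) (c : Fin n → Fin k)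
    (hc : ∀ v, (Finset.univ.filter fun w => G.Adj v w ∧ c w = c v).card ≤ d)
    (x : Fin n → ℝ) (i : Fin k) (y : Fin n → ℝ)
    (hy : ∀ w, y w = if c w = i then x w else 0) :
    y ⬝ᵥ (G.adjMatrix ℝ) *ᵥ y ≤ (d:ℝ) * (y ⬝ᵥ y) := by
  classical
  set B := G.adjMatrix ℝ with hB
  set e : Fin n → ℝ := fun v => if c v = i then 1 else 0 with he
  have hBnn : ∀ u w, 0 ≤ B u w := by
    intro u w; simp [hB, SimpleGraph.adjMatrix_apply]; split <;> norm_num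
  have hBsymm : ∀ u w, B u w = B w u := by
    intro u w; simp [hB, SimpleGraph.adjMatrix_apply, G.adj_comm]
  have step1 : ∀ u w, 2 * (y u * B u w * y w) ≤
      B u w * (y u)^2 * e w + B u w * (y w)^2 * e u := by
    intro u w
    by_cases hu : c u = i <;> by_cases hw : c w = i <;>
      simp only [hy, he, hu, hw, if_true, if_false, if_pos, if_neg] <;>
      nlinarith [hBnn u w, sq_nonneg (x u - x w), sq_nonneg (x u), sq_nonneg (x w)]
  have hS : ∀ u, c u = i → ∑ w, B u w * e w ≤ (d : ℝ) := by
    intro u hu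
    have hcard : ∑ w, B u w * e w
        = ((Finset.univ.filter fun w => G.Adj u w ∧ c w = c u).card : ℝ) := by
      rw [Finset.card_filter]
      push_cast
      refine Finset.sum_congr rfl fun w _ => ?_
      simp [hB, he, SimpleGraph.adjMatrix_apply, hu, ite_and]
      by_cases h1 : G.Adj u w <;> by_cases h2 : c w = i <;> simp [h1, h2]
    rw [hcard]
    exact_mod_cast hc u
  have step3 : ∀ u, (y u)^2 * (∑ w, B u w * e w) ≤ (d:ℝ) * (y u)^2 := by
    intro u
    by_cases hu : c u = i
    · have := mul_le_mul_of_nonneg_left (hS u hu) (sq_nonneg (y u)); linarith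
    · have hyu : y u = 0 := by rw [hy]; simp [hu]
      simp [hyu]
  have sumineq : 2 * (y ⬝ᵥ B *ᵥ y) ≤ (∑ u, ∑ w, B u w * (y u)^2 * e w)
      + (∑ u, ∑ w, B u w * (y w)^2 * e u) := by
    rw [dot_expand, Finset.mul_sum, ← Finset.sum_add_distrib]
    refine Finset.sum_le_sum fun u _ => ?_
    rw [Finset.mul_sum, ← Finset.sum_add_distrib]
    exact Finset.sum_le_sum fun w _ => step1 u w
  have step2 : (∑ u, ∑ w, B u w * (y w)^2 * e u) = ∑ u, ∑ w, B u w * (y u)^2 * e w := by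
    rw [Finset.sum_comm]
    refine Finset.sum_congr rfl fun u _ => Finset.sum_congr rfl fun w _ => ?_
    rw [hBsymm u w]
  have main : ∑ u, ∑ w, B u w * (y u)^2 * e w ≤ (d:ℝ) * (y ⬝ᵥ y) := by
    have hrow : ∀ u, ∑ w, B u w * (y u)^2 * e w = (y u)^2 * ∑ w, B u w * e w := by
      intro u; rw [Finset.mul_sum]; exact Finset.sum_congr rfl fun w _ => by ring
    calc ∑ u, ∑ w, B u w * (y u)^2 * e w = ∑ u, (y u)^2 * ∑ w, B u w * e w :=
          Finset.sum_congr rfl fun u _ => hrow u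
      _ ≤ ∑ u, (d:ℝ) * (y u)^2 := Finset.sum_le_sum fun u _ => step3 u
      _ = (d:ℝ) * (y ⬝ᵥ y) := by
          rw [← Finset.mul_sum]; congr 1; simp [dotProduct, sq]
  linarith



open SimpleGraph Finset Matrix

namespace ImproperPaper

variable {V W : Type*}

/-- The strong product of two simple graphs. -/
def strongProd (G : SimpleGraph V) (H : SimpleGraph W) : SimpleGraph (V × W) where
  Adj p q := (p.1 = q.1 ∧ H.Adj p.2 q.2) ∨ (G.Adj p.1 q.1 ∧ p.2 = q.2) ∨
    (G.Adj p.1 q.1 ∧ H.Adj p.2 q.2)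
  symm := by
    constructor
    rintro ⟨a, b⟩ ⟨x, y⟩ (⟨h1, h2⟩ | ⟨h1, h2⟩ | ⟨h1, h2⟩)
    · exact Or.inl ⟨h1.symm, h2.symm⟩
    · exact Or.inr (Or.inl ⟨h1.symm, h2.symm⟩)
    · exact Or.inr (Or.inr ⟨h1.symm, h2.symm⟩)
  loopless := by
    constructor
    rintro ⟨a, b⟩ (⟨h1, h2⟩ | ⟨h1, h2⟩ | ⟨h1, h2⟩)
    · exact H.irrefl h2
    · exact G.irrefl h1
    · exact G.irrefl h1

/-- The lexicographical product of two simple graphs. -/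
def lexProd (G : SimpleGraph V) (H : SimpleGraph W) : SimpleGraph (V × W) where
  Adj p q := G.Adj p.1 q.1 ∨ (p.1 = q.1 ∧ H.Adj p.2 q.2)
  symm := by
    constructor
    rintro ⟨a, b⟩ ⟨x, y⟩ (h | ⟨h1, h2⟩)
    · exact Or.inl h.symm
    · exact Or.inr ⟨h1.symm, h2.symm⟩
  loopless := by
    constructor
    rintro ⟨a, b⟩ (h | ⟨h1, h2⟩)
    · exact G.irrefl h
    · exact H.irrefl h2

instance {G : SimpleGraph V} {H : SimpleGraph W} [DecidableEq V] [DecidableEq W]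
    [DecidableRel G.Adj] [DecidableRel H.Adj] : DecidableRel (strongProd G H).Adj := fun p q =>
  show Decidable ((p.1 = q.1 ∧ H.Adj p.2 q.2) ∨ (G.Adj p.1 q.1 ∧ p.2 = q.2) ∨
    (G.Adj p.1 q.1 ∧ H.Adj p.2 q.2)) from inferInstance

/-- A colouring is `d`-improper if every colour class induces a subgraph of
maximum degree at most `d`. -/
def IsImproperColoring (G : SimpleGraph V) (d : ℕ) {α : Type*} (c : V → α) : Prop :=
  ∀ v : V, ({w | G.Adj v w ∧ c w = c v} : Set V).ncard ≤ d

/-- The `d`-improper chromatic number. -/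
noncomputable def improperChromaticNumber (G : SimpleGraph V) (d : ℕ) : ℕ :=
  sInf {n | ∃ c : V → Fin n, IsImproperColoring G d c}

/-- A colouring is `t`-clustered if every monochromatic connected component has at
most `t` vertices. -/
def IsClusteredColoring (G : SimpleGraph V) (t : ℕ) {α : Type*} (c : V → α) : Prop :=
  ∀ v : V,
    ({w | Relation.ReflTransGen (fun a b => G.Adj a b ∧ c a = c b) v w} : Set V).ncard ≤ t

/-- The `t`-clustered chromatic number. -/
noncomputable def clusteredChromaticNumber (G : SimpleGraph V) (t : ℕ) : ℕ :=
  sInf {n | ∃ c : V → Fin n, IsClusteredColoring G t c}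

/-- The chromatic number: least `n` admitting a proper colouring with `n` colours. -/
noncomputable def chromNum (G : SimpleGraph V) : ℕ :=
  sInf {n | ∃ c : V → Fin n, ∀ u v, G.Adj u v → c u ≠ c v}

/-- The `b`-fold `d`-improper chromatic number: least number of colours in an assignment
of `b` colours to each vertex such that, for every colour `x`, the set of vertices whose
colour set contains `x` induces a subgraph of maximum degree at most `d`. -/
noncomputable def bFoldImproperChromaticNumber (G : SimpleGraph V) (b d : ℕ) : ℕ :=
  sInf {n | ∃ c : V → Finset (Fin n), (∀ v, (c v).card = b) ∧
    ∀ v : V, ∀ x ∈ c v, ({w | G.Adj v w ∧ x ∈ c w} : Set V).ncard ≤ d}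

/-- The (proper) `b`-fold chromatic number. -/
noncomputable def bFoldChromaticNumber (G : SimpleGraph V) (b : ℕ) : ℕ :=
  bFoldImproperChromaticNumber G b 0

/-- The `b`-fold `t`-clustered chromatic number. -/
noncomputable def bFoldClusteredChromaticNumber (G : SimpleGraph V) (b t : ℕ) : ℕ :=
  sInf {n | ∃ c : V → Finset (Fin n), (∀ v, (c v).card = b) ∧
    ∀ x : Fin n, ∀ v : V, x ∈ c v →
      ({w | Relation.ReflTransGen (fun a b' => G.Adj a b' ∧ x ∈ c a ∧ x ∈ c b') v w} :
        Set V).ncard ≤ t}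

/-- The fractional chromatic number `χ_f(G) = inf { χ_b(G)/b : b ≥ 1 }`. -/
noncomputable def fracChromaticNumber (G : SimpleGraph V) : ℝ :=
  sInf {x : ℝ | ∃ b : ℕ, 0 < b ∧ x = (bFoldChromaticNumber G b : ℝ) / b}

/-- The fractional `d`-improper chromatic number. -/
noncomputable def fracImproperChromaticNumber (G : SimpleGraph V) (d : ℕ) : ℝ :=
  sInf {x : ℝ | ∃ b : ℕ, 0 < b ∧ x = (bFoldImproperChromaticNumber G b d : ℝ) / b}

/-- The fractional `t`-clustered chromatic number. -/
noncomputable def fracClusteredChromaticNumber (G : SimpleGraph V) (t : ℕ) : ℝ :=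
  sInf {x : ℝ | ∃ b : ℕ, 0 < b ∧ x = (bFoldClusteredChromaticNumber G b t : ℝ) / b}

/-- `lam` lists the eigenvalues of the Hermitian matrix `A` (with multiplicity) in
non-increasing order. -/
def IsEigList {n : ℕ} {A : Matrix (Fin n) (Fin n) ℝ} (hA : A.IsHermitian)
    (lam : Fin n → ℝ) : Prop :=
  Antitone lam ∧ ∃ σ : Equiv.Perm (Fin n), lam = hA.eigenvalues ∘ σ

/-- The largest size of a vertex subset inducing a subgraph of maximum degree at most `d`. -/
noncomputable def maxImproperIndep (G : SimpleGraph V) (d : ℕ) : ℕ :=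
  sSup {k | ∃ s : Set V, s.ncard = k ∧ ∀ v ∈ s, ({w | w ∈ s ∧ G.Adj v w} : Set V).ncard ≤ d}

end ImproperPaper

open ImproperPaper in

theorem stmt_0 {n : ℕ} (hn : 1 ≤ n) (G : SimpleGraph (Fin n)) [DecidableRel G.Adj]
    (hedge : ∃ u v : Fin n, G.Adj u v) (d : ℕ)
    (hA : (G.adjMatrix ℝ).IsHermitian) (lam : Fin n → ℝ) (hlam : IsEigList hA lam) :
    (lam ⟨0, by omega⟩ - lam ⟨n - 1, by omega⟩) / ((d : ℝ) - lam ⟨n - 1, by omega⟩) ≤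
        (improperChromaticNumber G d : ℝ) ∧
      (lam ⟨0, by omega⟩ - lam ⟨n - 1, by omega⟩) / ((d : ℝ) - lam ⟨n - 1, by omega⟩) =
        1 - (lam ⟨0, by omega⟩ - (d : ℝ)) / (lam ⟨n - 1, by omega⟩ - (d : ℝ)) := by
  classical
  obtain ⟨hanti, σ, hσ⟩ := hlam
  set B := G.adjMatrix ℝ with hBdef
  have hBsymm : Bᵀ = B := G.isSymm_adjMatrix
  set i0 : Fin n := ⟨0, by omega⟩ with hi0
  set iN : Fin n := ⟨n - 1, by omega⟩ with hiN
  have hlo : ∀ i, lam iN ≤ hA.eigenvalues i := by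
    intro i
    have h1 : hA.eigenvalues i = lam (σ.symm i) := by
      rw [hσ]; simp
    rw [h1]
    exact hanti (Fin.le_def.mpr (Nat.le_pred_of_lt (σ.symm i).isLt))
  have hhi : ∀ i, hA.eigenvalues i ≤ lam i0 := by
    intro i
    have h1 : hA.eigenvalues i = lam (σ.symm i) := by
      rw [hσ]; simp
    rw [h1]
    exact hanti (Fin.le_def.mpr (Nat.zero_le _))
  obtain ⟨a, b, hab⟩ := hedge
  have hne : a ≠ b := G.ne_of_adj hab
  have hlamN : lam iN ≤ -1 := by
    set v : Fin n → ℝ := Pi.single a (1:ℝ) - Pi.single b (1:ℝ) with hv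
    have h := rayleigh_lower hA (lam iN) hlo v
    have h1 : v ⬝ᵥ v = 2 := by
      simp [hv, sub_dotProduct, dotProduct_sub, single_dotProduct,
        dotProduct_single, Pi.single_apply, hne, hne.symm]
      norm_num
    have h2 : v ⬝ᵥ B *ᵥ v = -2 := by
      rw [hv, Matrix.mulVec_sub]
      simp [sub_dotProduct, dotProduct_sub, single_dotProduct,
        Matrix.mulVec_single, hBdef, SimpleGraph.adjMatrix_apply, hab, G.adj_comm a b]
      rw [if_pos hab.symm]
      norm_num
    rw [h1, h2] at h
    linarith
  have hdnn : (0:ℝ) ≤ d := Nat.cast_nonneg d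
  have hpos : 0 < (d:ℝ) - lam iN := by linarith
  refine ⟨?_, ?_⟩
  swap
  · have h1 : lam iN - (d:ℝ) ≠ 0 := by intro h; rw [sub_eq_zero] at h; linarith
    field_simp
    ring
  -- main inequality
  set k := improperChromaticNumber G d with hkdef
  have hmem : k ∈ {m | ∃ c : Fin n → Fin m, IsImproperColoring G d c} := by
    apply Nat.sInf_mem
    refine ⟨n, fun v => v, fun v => ?_⟩
    have hempty : ({w | G.Adj v w ∧ (fun u : Fin n => u) w = (fun u : Fin n => u) v} :
        Set (Fin n)) = ∅ := by
      ext w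
      simp only [Set.mem_setOf_eq, Set.mem_empty_iff_false, iff_false, not_and]
      intro h hwv
      exact G.irrefl (hwv ▸ h)
    rw [hempty]
    simp
  obtain ⟨c, hc⟩ := hmem
  have hk1 : 1 ≤ k := by
    exact Fin.pos_iff_nonempty.mpr ⟨c ⟨0, by omega⟩⟩
  have hcard : ∀ v, (Finset.univ.filter fun w => G.Adj v w ∧ c w = c v).card ≤ d := by
    intro v
    have h := hc v
    rw [Set.ncard_eq_toFinset_card'] at h
    rwa [Set.toFinset_setOf] at h
  -- top eigenvector
  set x : Fin n → ℝ := ⇑(hA.eigenvectorBasis (σ i0)) with hxdef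
  have hx : B *ᵥ x = lam i0 • x := by
    rw [hxdef, hA.mulVec_eigenvectorBasis]
    congr 1
    rw [hσ]; rfl
  have hxx : x ⬝ᵥ x = 1 := by
    have h1 : (inner ℝ (hA.eigenvectorBasis (σ i0)) (hA.eigenvectorBasis (σ i0)) : ℝ)
        = x ⬝ᵥ x := by
      simp only [hxdef, PiLp.inner_apply, RCLike.inner_apply, conj_trivial, dotProduct]
    have h2 := hA.eigenvectorBasis.orthonormal.1 (σ i0)
    rw [← h1, real_inner_self_eq_norm_sq, h2]
    norm_num
  set y : Fin k → Fin n → ℝ := fun i w => if c w = i then x w else 0 with hydef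
  have hyx : ∀ i, y i ⬝ᵥ x = y i ⬝ᵥ y i := by
    intro i
    refine Finset.sum_congr rfl fun w _ => ?_
    by_cases h : c w = i <;> simp [hydef, h]
  have hxy : ∀ i, x ⬝ᵥ y i = y i ⬝ᵥ y i := fun i =>
    (dotProduct_comm x (y i)).trans (hyx i)
  have hsumyy : ∑ i, (y i ⬝ᵥ y i) = 1 := by
    rw [← hxx]
    rw [show (∑ i, (y i ⬝ᵥ y i)) = ∑ i, ∑ w, y i w * y i w from rfl, Finset.sum_comm]
    refine Finset.sum_congr rfl fun w _ => ?_
    rw [show (∑ i, y i w * y i w) = ∑ i, if c w = i then x w * x w else 0 from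
      Finset.sum_congr rfl fun i _ => by by_cases h : c w = i <;> simp [hydef, h]]
    rw [Finset.sum_ite_eq]
    simp
  have hqy : ∀ i, y i ⬝ᵥ B *ᵥ y i ≤ (d:ℝ) * (y i ⬝ᵥ y i) := fun i =>
    class_bound G d c hcard x i (y i) (fun w => rfl)
  have hyynn : ∀ i, 0 ≤ y i ⬝ᵥ y i := fun i =>
    Finset.sum_nonneg fun w _ => mul_self_nonneg _
  -- the vectors z i
  set z : Fin k → Fin n → ℝ := fun i => x - (k:ℝ) • y i with hzdef
  have hqx : x ⬝ᵥ B *ᵥ x = lam i0 := by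
    rw [hx, dotProduct_smul, smul_eq_mul, hxx, mul_one]
  have hyBx : ∀ i, y i ⬝ᵥ B *ᵥ x = lam i0 * (y i ⬝ᵥ y i) := by
    intro i
    rw [hx, dotProduct_smul, smul_eq_mul, hyx i]
  have hxBy : ∀ i, x ⬝ᵥ B *ᵥ y i = lam i0 * (y i ⬝ᵥ y i) := by
    intro i
    rw [dot_symm hBsymm, hyBx i]
  have hqz : ∀ i, z i ⬝ᵥ B *ᵥ z i
      = lam i0 - 2*(k:ℝ)*lam i0*(y i ⬝ᵥ y i) + (k:ℝ)^2 * (y i ⬝ᵥ B *ᵥ y i) := by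
    intro i
    rw [hzdef]
    simp only [Matrix.mulVec_sub, Matrix.mulVec_smul, sub_dotProduct,
      dotProduct_sub, smul_dotProduct, dotProduct_smul, smul_eq_mul]
    rw [hqx, hxBy i, hyBx i]
    ring
  have hzz : ∀ i, z i ⬝ᵥ z i = 1 - 2*(k:ℝ)*(y i ⬝ᵥ y i) + (k:ℝ)^2 * (y i ⬝ᵥ y i) := by
    intro i
    rw [hzdef]
    simp only [sub_dotProduct, dotProduct_sub, smul_dotProduct,
      dotProduct_smul, smul_eq_mul]
    rw [hxx, hxy i, hyx i]
    ring
  have hray : ∀ i, lam iN * (z i ⬝ᵥ z i) ≤ z i ⬝ᵥ B *ᵥ z i := fun i =>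
    rayleigh_lower hA (lam iN) hlo (z i)
  have hsum := Finset.sum_le_sum (fun i (_ : i ∈ Finset.univ) => hray i)
  have hsumzz : ∑ i, lam iN * (z i ⬝ᵥ z i) = lam iN * ((k:ℝ)^2 - k) := by
    rw [← Finset.mul_sum]
    congr 1
    rw [show (∑ i, (z i ⬝ᵥ z i))
        = ∑ i, (1 - 2*(k:ℝ)*(y i ⬝ᵥ y i) + (k:ℝ)^2 * (y i ⬝ᵥ y i)) from
      Finset.sum_congr rfl fun i _ => hzz i]
    rw [Finset.sum_add_distrib, Finset.sum_sub_distrib, ← Finset.mul_sum, ← Finset.mul_sum,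
      hsumyy, Finset.sum_const, Finset.card_univ, Fintype.card_fin, nsmul_eq_mul]
    ring
  have hsumq : ∑ i, (z i ⬝ᵥ B *ᵥ z i) ≤ -(k:ℝ)*lam i0 + (k:ℝ)^2*d := by
    have h1 : ∑ i, (z i ⬝ᵥ B *ᵥ z i)
        ≤ ∑ i, (lam i0 - 2*(k:ℝ)*lam i0*(y i ⬝ᵥ y i) + (k:ℝ)^2 * ((d:ℝ) * (y i ⬝ᵥ y i))) := by
      refine Finset.sum_le_sum fun i _ => ?_
      rw [hqz i]
      have := mul_le_mul_of_nonneg_left (hqy i) (sq_nonneg (k:ℝ))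
      linarith
    refine h1.trans (le_of_eq ?_)
    rw [Finset.sum_add_distrib, Finset.sum_sub_distrib, ← Finset.mul_sum, ← Finset.mul_sum,
      ← Finset.mul_sum, hsumyy, Finset.sum_const, Finset.card_univ, Fintype.card_fin,
      nsmul_eq_mul]
    ring
  rw [hsumzz] at hsum
  have key : lam iN * ((k:ℝ)^2 - k) ≤ -(k:ℝ)*lam i0 + (k:ℝ)^2*d := hsum.trans hsumq
  have hkpos : (0:ℝ) < k := by exact_mod_cast hk1
  have hkk : (1:ℝ) ≤ k := by exact_mod_cast hk1
  have h2 : (k:ℝ) * (lam i0 - lam iN) ≤ (k:ℝ) * ((k:ℝ)*((d:ℝ) - lam iN)) := by nlinarith [key]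
  have h3 : lam i0 - lam iN ≤ (k:ℝ)*((d:ℝ) - lam iN) := le_of_mul_le_mul_left h2 hkpos
  rw [div_le_iff₀ hpos]
  exact h3
end

section
/- Let G be a finite connected k-regular simple graph on n ≥ 1 vertices with at least one edge and let d ≥ 0 be an integer, and suppose χ^d(G) = (λ₁ − λₙ)/(d − λₙ) = m. Then in every d-improper colouring of G with m colours, the partition into colour classes is equitable: every vertex has exactly d neighbours in its own colour class and exactly d − λₙ neighbours in every other colour class, and all colour classes have the same size. -/
open SimpleGraph Finset Matrix

section AuxStmt3


lemma stmt3_sum_smul_dot {N : ℕ} (f : Fin N → Fin N → ℝ) (a : Fin N → ℝ) (w : Fin N → ℝ) :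
    (∑ i, a i • f i) ⬝ᵥ w = ∑ i, a i * (f i ⬝ᵥ w) := by
  simp only [dotProduct, Finset.sum_apply, Pi.smul_apply, smul_eq_mul, Finset.sum_mul,
    Finset.mul_sum, mul_assoc]
  exact Finset.sum_comm

lemma stmt3_dot_sum_smul {N : ℕ} (f : Fin N → Fin N → ℝ) (a : Fin N → ℝ) (w : Fin N → ℝ) :
    w ⬝ᵥ (∑ i, a i • f i) = ∑ i, a i * (w ⬝ᵥ f i) := by
  simp only [dotProduct, Finset.sum_apply, Pi.smul_apply, smul_eq_mul, Finset.mul_sum]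
  rw [Finset.sum_comm]
  exact Finset.sum_congr rfl fun i _ => Finset.sum_congr rfl fun v _ => by ring

lemma stmt3_rayleigh {N : ℕ} {A : Matrix (Fin N) (Fin N) ℝ} (hA : A.IsHermitian) (μ : ℝ)
    (hμ : ∀ i, μ ≤ hA.eigenvalues i) (y : Fin N → ℝ) :
    μ * (y ⬝ᵥ y) ≤ y ⬝ᵥ (A *ᵥ y) ∧
      (y ⬝ᵥ (A *ᵥ y) ≤ μ * (y ⬝ᵥ y) → A *ᵥ y = μ • y) := by
  classical
  set E : Fin N → (Fin N → ℝ) := fun i => ⇑(hA.eigenvectorBasis i) with hEdef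
  set c : Fin N → ℝ := fun i => (hA.eigenvectorBasis).repr (WithLp.toLp 2 y) i with hc
  have hE : ∀ i, A *ᵥ E i = hA.eigenvalues i • E i := fun i => hA.mulVec_eigenvectorBasis i
  have horth : ∀ i j, E i ⬝ᵥ E j = if i = j then 1 else 0 := by
    intro i j
    have := orthonormal_iff_ite.mp (hA.eigenvectorBasis).orthonormal i j
    simpa [PiLp.inner_apply, RCLike.inner_apply, dotProduct, mul_comm] using this
  have hy : y = ∑ i, c i • E i := by
    have := congrArg WithLp.ofLp ((hA.eigenvectorBasis).sum_repr (WithLp.toLp 2 y))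
    rw [WithLp.ofLp_sum] at this
    simpa only [WithLp.ofLp_smul, WithLp.ofLp_toLp] using this.symm
  have hAy : A *ᵥ y = ∑ i, (c i * hA.eigenvalues i) • E i := by
    conv_lhs => rw [hy]
    rw [← Matrix.mulVecLin_apply, map_sum]
    refine Finset.sum_congr rfl fun i _ => ?_
    rw [_root_.map_smul, Matrix.mulVecLin_apply, hE i, smul_smul]
  have dot_orth : ∀ a b : Fin N → ℝ,
      (∑ i, a i • E i) ⬝ᵥ (∑ j, b j • E j) = ∑ i, a i * b i := by
    intro a b
    rw [stmt3_sum_smul_dot]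
    refine Finset.sum_congr rfl fun i _ => ?_
    rw [stmt3_dot_sum_smul]
    simp [horth, mul_ite]
  have hyy : y ⬝ᵥ y = ∑ i, c i * c i := by conv_lhs => rw [hy]; rw [dot_orth]
  have hyAy : y ⬝ᵥ (A *ᵥ y) = ∑ i, c i * (c i * hA.eigenvalues i) := by
    conv_lhs => rw [hAy, hy]
    rw [dot_orth]
  constructor
  · rw [hyy, hyAy, Finset.mul_sum]
    refine Finset.sum_le_sum fun i _ => ?_
    have h1 := hμ i
    nlinarith [sq_nonneg (c i)]
  · intro hle
    have hsum0 : ∑ i, c i * c i * (hA.eigenvalues i - μ) = 0 := by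
      have hle' : ∑ i, c i * c i * (hA.eigenvalues i - μ) ≤ 0 := by
        rw [hyy, hyAy, Finset.mul_sum] at hle
        have heq2 : ∑ i, c i * c i * (hA.eigenvalues i - μ) =
            (∑ i, c i * (c i * hA.eigenvalues i)) - ∑ i, μ * (c i * c i) := by
          rw [← Finset.sum_sub_distrib]; exact Finset.sum_congr rfl fun i _ => by ring
        rw [heq2]; linarith
      have hge : (0:ℝ) ≤ ∑ i, c i * c i * (hA.eigenvalues i - μ) := by
        refine Finset.sum_nonneg fun i _ => ?_
        have h1 := hμ i
        nlinarith [sq_nonneg (c i)]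
      linarith
    have hzero := (Finset.sum_eq_zero_iff_of_nonneg (fun i _ => by
      have h1 := hμ i; nlinarith [sq_nonneg (c i)])).mp hsum0
    have hci : ∀ i, c i * hA.eigenvalues i = μ * c i := by
      intro i
      have h := hzero i (Finset.mem_univ i)
      rcases mul_eq_zero.mp h with h' | h'
      · have hc0 : c i = 0 := by nlinarith [sq_nonneg (c i)]
        simp [hc0]
      · have hμi : hA.eigenvalues i = μ := by linarith
        rw [hμi]; ring
    rw [hAy]
    conv_rhs => rw [hy]
    rw [Finset.smul_sum]
    refine Finset.sum_congr rfl fun i _ => ?_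
    rw [hci, smul_smul]

lemma stmt3_eig_le {N : ℕ} {G : SimpleGraph (Fin N)} [DecidableRel G.Adj] {k : ℕ}
    (hreg : G.IsRegularOfDegree k) (hA : (G.adjMatrix ℝ).IsHermitian) (i : Fin N) :
    hA.eigenvalues i ≤ k := by
  classical
  set E : Fin N → ℝ := ⇑(hA.eigenvectorBasis i) with hEdef
  have hE : G.adjMatrix ℝ *ᵥ E = hA.eigenvalues i • E := hA.mulVec_eigenvectorBasis i
  have hne : ∃ w, E w ≠ 0 := by
    by_contra h
    push_neg at h
    have horm := orthonormal_iff_ite.mp hA.eigenvectorBasis.orthonormal i i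
    rw [if_pos rfl] at horm
    simp only [PiLp.inner_apply, RCLike.inner_apply] at horm
    rw [Finset.sum_eq_zero (fun v _ => by rw [show (hA.eigenvectorBasis i) v = E v from rfl, h v]; simp)] at horm
    norm_num at horm
  obtain ⟨w0, hw0⟩ := hne
  obtain ⟨v, -, hmax⟩ := Finset.exists_max_image Finset.univ (fun w => |E w|)
    ⟨w0, Finset.mem_univ w0⟩
  have hvpos : 0 < |E v| := lt_of_lt_of_le (abs_pos.mpr hw0) (hmax w0 (Finset.mem_univ _))
  have heval : hA.eigenvalues i * E v = ∑ w ∈ G.neighborFinset v, E w := by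
    have h1 := congrFun hE v
    rw [SimpleGraph.adjMatrix_mulVec_apply] at h1
    simpa using h1.symm
  have habs : hA.eigenvalues i * |E v| ≤ (k:ℝ) * |E v| := by
    calc hA.eigenvalues i * |E v| ≤ |hA.eigenvalues i| * |E v| :=
          mul_le_mul_of_nonneg_right (le_abs_self _) (abs_nonneg _)
      _ = |hA.eigenvalues i * E v| := (abs_mul _ _).symm
      _ = |∑ w ∈ G.neighborFinset v, E w| := by rw [heval]
      _ ≤ ∑ w ∈ G.neighborFinset v, |E w| := Finset.abs_sum_le_sum_abs _ _
      _ ≤ ∑ w ∈ G.neighborFinset v, |E v| := Finset.sum_le_sum fun w _ => hmax w (Finset.mem_univ _)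
      _ = (G.degree v : ℝ) * |E v| := by
          rw [Finset.sum_const, SimpleGraph.card_neighborFinset_eq_degree, nsmul_eq_mul]
      _ = (k:ℝ) * |E v| := by rw [hreg v]
  exact le_of_mul_le_mul_right habs hvpos


lemma stmt3_min_neg {N : ℕ} {G : SimpleGraph (Fin N)} [DecidableRel G.Adj]
    (hA : (G.adjMatrix ℝ).IsHermitian) {u0 v0 : Fin N} (huv : G.Adj u0 v0)
    {μ : ℝ} (hμle : ∀ i, μ ≤ hA.eigenvalues i) : μ ≤ -1 := by
  classical
  have hne : u0 ≠ v0 := G.ne_of_adj huv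
  set z : Fin N → ℝ := fun w => if w = u0 then 1 else if w = v0 then -1 else 0 with hz
  have hray := (stmt3_rayleigh hA μ hμle z).1
  have hzz : z ⬝ᵥ z = 2 := by
    have hpt : ∀ w, z w * z w =
        (if w = u0 then (1:ℝ) else 0) + (if w = v0 then (1:ℝ) else 0) := by
      intro w
      rw [hz]
      by_cases h1 : w = u0
      · subst h1; simp [hne]
      · by_cases h2 : w = v0 <;> simp [h1, h2, hne.symm]
    rw [dotProduct, Finset.sum_congr rfl fun w _ => hpt w, Finset.sum_add_distrib]
    rw [Finset.sum_ite_eq' Finset.univ u0 (fun _ => (1:ℝ)),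
      Finset.sum_ite_eq' Finset.univ v0 (fun _ => (1:ℝ))]
    norm_num
  have hzd : ∀ (w : Fin N), (∑ x ∈ G.neighborFinset w, z x) =
      (if u0 ∈ G.neighborFinset w then (1:ℝ) else 0)
        - (if v0 ∈ G.neighborFinset w then (1:ℝ) else 0) := by
    intro w
    have hpt : ∀ x, z x = (if x = u0 then (1:ℝ) else 0) - (if x = v0 then (1:ℝ) else 0) := by
      intro x
      rw [hz]
      by_cases h1 : x = u0
      · subst h1; simp [hne]
      · by_cases h2 : x = v0 <;> simp [h1, h2, hne.symm]
    rw [Finset.sum_congr rfl fun x _ => hpt x, Finset.sum_sub_distrib]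
    rw [Finset.sum_ite_eq' (G.neighborFinset w) u0 (fun _ => (1:ℝ)),
      Finset.sum_ite_eq' (G.neighborFinset w) v0 (fun _ => (1:ℝ))]
  have hzAz : z ⬝ᵥ (G.adjMatrix ℝ *ᵥ z) = -2 := by
    have hpt : ∀ w, z w * (G.adjMatrix ℝ *ᵥ z) w =
        (if w = u0 then (G.adjMatrix ℝ *ᵥ z) w else 0)
          - (if w = v0 then (G.adjMatrix ℝ *ᵥ z) w else 0) := by
      intro w
      rw [hz]
      by_cases h1 : w = u0
      · subst h1; simp [hne]
      · by_cases h2 : w = v0 <;> simp [h1, h2, hne.symm]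
    rw [dotProduct, Finset.sum_congr rfl fun w _ => hpt w, Finset.sum_sub_distrib]
    rw [Finset.sum_ite_eq' Finset.univ u0 (fun w => (G.adjMatrix ℝ *ᵥ z) w),
      Finset.sum_ite_eq' Finset.univ v0 (fun w => (G.adjMatrix ℝ *ᵥ z) w)]
    simp only [Finset.mem_univ, if_pos]
    rw [SimpleGraph.adjMatrix_mulVec_apply, SimpleGraph.adjMatrix_mulVec_apply, hzd u0, hzd v0]
    have h1 : u0 ∉ G.neighborFinset u0 := by simp
    have h2 : v0 ∈ G.neighborFinset u0 := by simp [huv]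
    have h3 : u0 ∈ G.neighborFinset v0 := by simp [huv.symm]
    have h4 : v0 ∉ G.neighborFinset v0 := by simp
    rw [if_pos h2, if_pos h3, if_neg h1, if_neg h4]
    norm_num
  rw [hzz, hzAz] at hray
  linarith

end AuxStmt3

open ImproperPaper in

theorem stmt_3 {n : ℕ} (hn : 1 ≤ n) (G : SimpleGraph (Fin n)) [DecidableRel G.Adj]
    (hconn : G.Connected) (hedge : ∃ u v : Fin n, G.Adj u v) (k d m : ℕ)
    (hreg : G.IsRegularOfDegree k)
    (hA : (G.adjMatrix ℝ).IsHermitian) (lam : Fin n → ℝ) (hlam : IsEigList hA lam)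
    (hm : improperChromaticNumber G d = m)
    (heq : (m : ℝ) =
      (lam ⟨0, by omega⟩ - lam ⟨n - 1, by omega⟩) / ((d : ℝ) - lam ⟨n - 1, by omega⟩)) :
    ∀ c : Fin n → Fin m, IsImproperColoring G d c →
      (∀ v : Fin n, ({w | G.Adj v w ∧ c w = c v} : Set (Fin n)).ncard = d) ∧
      (∀ v : Fin n, ∀ j : Fin m, j ≠ c v →
        (({w | G.Adj v w ∧ c w = j} : Set (Fin n)).ncard : ℝ) =
          (d : ℝ) - lam ⟨n - 1, by omega⟩) ∧
      (∀ i j : Fin m,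
        ({v : Fin n | c v = i} : Set (Fin n)).ncard =
          ({v : Fin n | c v = j} : Set (Fin n)).ncard) := by
    classical
  intro c hc
  obtain ⟨hanti, σ, hσ⟩ := hlam
  have hn1 : n - 1 < n := by omega
  have h0n : 0 < n := hn
  set μ : ℝ := lam ⟨n - 1, hn1⟩ with hμdef
  set κ : ℝ := lam ⟨0, h0n⟩ with hκdef
  set A : Matrix (Fin n) (Fin n) ℝ := G.adjMatrix ℝ with hAdef
  -- eigenvalue bounds
  have hμle : ∀ i, μ ≤ hA.eigenvalues i := by
    intro i
    have h1 : hA.eigenvalues i = lam (σ.symm i) := by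
      rw [hσ]; simp
    rw [h1, hμdef]
    apply hanti
    rw [Fin.le_def]
    have := (σ.symm i).isLt
    simp
    omega
  have hκk : κ ≤ (k : ℝ) := by
    rw [hκdef, hσ]
    exact stmt3_eig_le hreg hA _
  obtain ⟨u0, v0, huv⟩ := hedge
  have hk1 : 1 ≤ k := by
    have h1 : 0 < G.degree u0 := by
      rw [← SimpleGraph.card_neighborFinset_eq_degree]
      exact Finset.card_pos.mpr ⟨v0, (SimpleGraph.mem_neighborFinset G u0 v0).mpr huv⟩
    rw [hreg u0] at h1
    omega
  have hμneg : μ ≤ -1 := stmt3_min_neg hA huv hμle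
  have hk1' : (1:ℝ) ≤ (k:ℝ) := by exact_mod_cast hk1
  have hkμ : (0:ℝ) < (k:ℝ) - μ := by linarith
  have hdμ : (0:ℝ) < (d:ℝ) - μ := by
    have : (0:ℝ) ≤ (d:ℝ) := Nat.cast_nonneg d
    linarith
  set t : ℝ := ((d:ℝ) - μ) / ((k:ℝ) - μ) with htdef
  have ht : t * ((k:ℝ) - μ) = (d:ℝ) - μ := div_mul_cancel₀ _ (ne_of_gt hkμ)
  have ht0 : 0 < t := div_pos hdμ hkμ
  have hM : (m:ℝ) * ((d:ℝ) - μ) = κ - μ := by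
    rw [heq]
    field_simp
  clear_value μ κ
  clear_value t
  -- setup vectors
  set x : Fin m → Fin n → ℝ := fun j v => if c v = j then 1 else 0 with hx
  set one : Fin n → ℝ := fun _ => 1 with hone
  set Sf : Fin m → Finset (Fin n) := fun j => Finset.univ.filter (fun v => c v = j) with hSf
  set a : Fin m → ℝ := fun j => ((Sf j).card : ℝ) with ha
  set y : Fin m → Fin n → ℝ := fun j => x j - t • one with hy
  have hxsum : ∀ j, (∑ v, x j v) = a j := by
    intro j
    simp [hx, ha, hSf, Finset.sum_boole]
  have hdeg_card : ∀ j v, (A *ᵥ x j) v =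
      (((G.neighborFinset v).filter (fun w => c w = j)).card : ℝ) := by
    intro j v
    rw [hAdef, SimpleGraph.adjMatrix_mulVec_apply]
    simp [hx, Finset.sum_boole]
  have hsetF : ∀ v (j : Fin m), ({w | G.Adj v w ∧ c w = j} : Set (Fin n)) =
      ↑((G.neighborFinset v).filter (fun w => c w = j)) := by
    intro v j
    ext w
    simp [SimpleGraph.mem_neighborFinset]
  have hncard : ∀ v (j : Fin m), (({w | G.Adj v w ∧ c w = j} : Set (Fin n)).ncard : ℝ) =
      (A *ᵥ x j) v := by
    intro v j
    rw [hsetF, Set.ncard_coe_finset, hdeg_card]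
  have himp : ∀ v, (A *ᵥ x (c v)) v ≤ (d:ℝ) := by
    intro v
    rw [← hncard v (c v)]
    exact_mod_cast hc v
  have hA1 : A *ᵥ one = (k:ℝ) • one := by
    ext v
    rw [hAdef, SimpleGraph.adjMatrix_mulVec_apply]
    simp [hone, SimpleGraph.card_neighborFinset_eq_degree, hreg v]
  have hsymm : ∀ u w : Fin n → ℝ, u ⬝ᵥ (A *ᵥ w) = (A *ᵥ u) ⬝ᵥ w := by
    intro u w
    rw [Matrix.dotProduct_mulVec]
    congr 1
    ext v
    rw [hAdef, SimpleGraph.adjMatrix_vecMul_apply, SimpleGraph.adjMatrix_mulVec_apply]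
  have hxx : ∀ j, x j ⬝ᵥ x j = a j := by
    intro j
    rw [dotProduct]
    rw [Finset.sum_congr rfl (fun v _ => show x j v * x j v = x j v by
      by_cases h : c v = j <;> simp [hx, h])]
    exact hxsum j
  have hx1 : ∀ j, x j ⬝ᵥ one = a j := by
    intro j
    rw [dotProduct]
    rw [Finset.sum_congr rfl (fun v _ => show x j v * one v = x j v by simp [hone])]
    exact hxsum j
  have h1x : ∀ j, one ⬝ᵥ x j = a j := by
    intro j
    rw [dotProduct]
    rw [Finset.sum_congr rfl (fun v _ => show one v * x j v = x j v by simp [hone])]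
    exact hxsum j
  have h11 : one ⬝ᵥ one = (n:ℝ) := by
    simp [dotProduct, hone]
  have hxA1 : ∀ j, x j ⬝ᵥ (A *ᵥ one) = (k:ℝ) * a j := by
    intro j
    rw [hA1, dotProduct_smul, hx1, smul_eq_mul]
  have h1Ax : ∀ j, one ⬝ᵥ (A *ᵥ x j) = (k:ℝ) * a j := by
    intro j
    rw [hsymm, hA1, smul_dotProduct, h1x, smul_eq_mul]
  have h1A1 : one ⬝ᵥ (A *ᵥ one) = (k:ℝ) * n := by
    rw [hA1, dotProduct_smul, h11, smul_eq_mul]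
  set E : Fin m → ℝ := fun j => x j ⬝ᵥ (A *ᵥ x j) with hE
  have hE_le : ∀ j, E j ≤ (d:ℝ) * a j := by
    intro j
    rw [hE]
    simp only
    rw [dotProduct]
    have hsplit : ∀ v, x j v * (A *ᵥ x j) v = if c v = j then (A *ᵥ x j) v else 0 := by
      intro v
      by_cases h : c v = j <;> simp [hx, h]
    rw [Finset.sum_congr rfl fun v _ => hsplit v, ← Finset.sum_filter]
    have hb : ∀ v ∈ Finset.univ.filter (fun v => c v = j), (A *ᵥ x j) v ≤ (d:ℝ) := by
      intro v hv
      rw [Finset.mem_filter] at hv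
      have := himp v
      rwa [hv.2] at this
    calc ∑ v ∈ Finset.univ.filter (fun v => c v = j), (A *ᵥ x j) v
        ≤ ∑ v ∈ Finset.univ.filter (fun v => c v = j), (d:ℝ) := Finset.sum_le_sum hb
      _ = (d:ℝ) * a j := by
          rw [Finset.sum_const, nsmul_eq_mul, ha, hSf]
          ring
  have hyAy : ∀ j, y j ⬝ᵥ (A *ᵥ y j) = E j - 2*t*((k:ℝ)* a j) + t^2*((k:ℝ)*n) := by
    intro j
    rw [hy]
    simp only
    simp only [Matrix.mulVec_sub, Matrix.mulVec_smul, sub_dotProduct,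
      smul_dotProduct, dotProduct_sub, dotProduct_smul, smul_eq_mul]
    rw [hxA1 j, h1Ax j, h1A1]
    rw [hE]
    ring
  have hyy : ∀ j, y j ⬝ᵥ y j = a j - 2*t*a j + t^2*n := by
    intro j
    rw [hy]
    simp only
    simp only [sub_dotProduct, smul_dotProduct, dotProduct_sub,
      dotProduct_smul, smul_eq_mul]
    rw [hxx j, hx1 j, h1x j, h11]
    ring
  set P : Fin m → ℝ := fun j => y j ⬝ᵥ (A *ᵥ y j) - μ * (y j ⬝ᵥ y j) with hP
  set Q : Fin m → ℝ := fun j => (d:ℝ) * a j - E j with hQ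
  have hP0 : ∀ j, 0 ≤ P j := by
    intro j
    have := (stmt3_rayleigh hA μ hμle (y j)).1
    rw [hP]; simp only; linarith
  have hQ0 : ∀ j, 0 ≤ Q j := by
    intro j
    have := hE_le j
    rw [hQ]; simp only; linarith
  have hsuma : ∑ j, a j = (n:ℝ) := by
    have hcard : (Finset.univ : Finset (Fin n)).card =
        ∑ j, (Finset.univ.filter (fun v => c v = j)).card :=
      Finset.card_eq_sum_card_fiberwise (fun v _ => Finset.mem_univ (c v))
    have := congrArg (fun q : ℕ => (q : ℝ)) hcard
    push_cast at this
    rw [ha, hSf]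
    simp only
    rw [← this]
    simp
  have hsumPQ : ∑ j, (P j + Q j) ≤ 0 := by
    have hterm : ∀ j, P j + Q j =
        a j * ((d:ℝ) - μ - 2*t*((k:ℝ)-μ)) + (t^2*(k:ℝ)*n - μ*(t^2*(n:ℝ))) := by
      intro j
      rw [hP, hQ]
      simp only
      rw [hyAy j, hyy j]
      ring
    rw [Finset.sum_congr rfl fun j _ => hterm j]
    rw [Finset.sum_add_distrib, ← Finset.sum_mul, hsuma, Finset.sum_const]
    simp only [Finset.card_univ, Fintype.card_fin, nsmul_eq_mul]
    have hkey : (n:ℝ) * ((d:ℝ) - μ - 2*t*((k:ℝ)-μ)) + (m:ℝ) * (t^2*(k:ℝ)*n - μ*(t^2*(n:ℝ)))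
        = (n:ℝ) * t * (κ - (k:ℝ)) := by
      have h1 : (m:ℝ) * (t^2*(k:ℝ)*n - μ*(t^2*(n:ℝ))) = (n:ℝ) * (t * (κ - μ)) := by
        have h2 : t^2*(k:ℝ)*n - μ*(t^2*(n:ℝ)) = (n:ℝ) * (t * (t * ((k:ℝ) - μ))) := by ring
        rw [h2, ht]
        have h3 : (m:ℝ) * ((n:ℝ) * (t * ((d:ℝ) - μ))) = (n:ℝ) * (t * ((m:ℝ) * ((d:ℝ)-μ))) := by
          ring
        rw [h3, hM]
      rw [h1]
      have h4 : (n:ℝ) * ((d:ℝ) - μ - 2*t*((k:ℝ)-μ)) =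
          (n:ℝ) * ((d:ℝ) - μ) - 2*(n:ℝ)*(t*((k:ℝ)-μ)) := by ring
      rw [h4, ht]
      linear_combination (n:ℝ) * ht
    have hn0 : (0:ℝ) ≤ (n:ℝ) := Nat.cast_nonneg n
    have : (n:ℝ) * t * (κ - (k:ℝ)) ≤ 0 := by
      apply mul_nonpos_of_nonneg_of_nonpos
      · positivity
      · linarith
    linarith [hkey, this]
  have hsum0 : ∀ j, P j + Q j = 0 := by
    have hle := hsumPQ
    have hge : (0:ℝ) ≤ ∑ j, (P j + Q j) :=
      Finset.sum_nonneg fun j _ => add_nonneg (hP0 j) (hQ0 j)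
    have h00 : ∑ j, (P j + Q j) = 0 := le_antisymm hle hge
    intro j
    exact (Finset.sum_eq_zero_iff_of_nonneg
      (fun j _ => add_nonneg (hP0 j) (hQ0 j))).mp h00 j (Finset.mem_univ j)
  have heig : ∀ j, A *ᵥ y j = μ • y j := by
    intro j
    apply (stmt3_rayleigh hA μ hμle (y j)).2
    have h1 := hsum0 j
    have h2 := hQ0 j
    have h3 : P j = 0 := by linarith [hP0 j]
    rw [hP] at h3
    simp only at h3
    linarith
  have hptwise : ∀ (j : Fin m) v, (A *ᵥ x j) v = μ * (x j v - t) + t * (k:ℝ) := by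
    intro j v
    have h1 := congrFun (heig j) v
    rw [hy] at h1
    simp only at h1
    rw [Matrix.mulVec_sub, Matrix.mulVec_smul, hA1] at h1
    simp only [Pi.sub_apply, Pi.smul_apply, smul_eq_mul, hone] at h1
    linarith [h1]
  refine ⟨?_, ?_, ?_⟩
  · intro v
    have h1 := hptwise (c v) v
    have hxv : x (c v) v = 1 := by simp [hx]
    rw [hxv] at h1
    have h2 : (A *ᵥ x (c v)) v = (d:ℝ) := by
      rw [h1]
      have h3 : μ * (1 - t) + t * (k:ℝ) = μ + t * ((k:ℝ) - μ) := by ring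
      rw [h3, ht]
      ring
    have h3 := hncard v (c v)
    rw [h2] at h3
    exact_mod_cast h3
  · intro v j hj
    have h1 := hptwise j v
    have hxv : x j v = 0 := by simp [hx]; exact fun h => hj h.symm
    rw [hxv] at h1
    have h2 : (A *ᵥ x j) v = (d:ℝ) - μ := by
      rw [h1]
      have h3 : μ * (0 - t) + t * (k:ℝ) = t * ((k:ℝ) - μ) := by ring
      rw [h3, ht]
    rw [hncard v j, h2]
  · intro i j
    have hclass : ∀ j : Fin m, a j = (n:ℝ) * t := by
      intro j
      have h1 := h1Ax j
      have h2 : one ⬝ᵥ (A *ᵥ x j) = μ * (a j - (n:ℝ)*t) + (n:ℝ)*(t*(k:ℝ)) := by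
        have e1 : one ⬝ᵥ (A *ᵥ x j) = ∑ v, (A *ᵥ x j) v := by
          simp [dotProduct, hone]
        rw [e1, Finset.sum_congr rfl fun v _ => hptwise j v]
        rw [Finset.sum_add_distrib, Finset.sum_const, ← Finset.mul_sum,
          Finset.sum_sub_distrib, Finset.sum_const, hxsum j]
        simp only [Finset.card_univ, Fintype.card_fin, nsmul_eq_mul, smul_eq_mul]
      rw [h2] at h1
      have h3 : (a j - (n:ℝ)*t) * ((k:ℝ) - μ) = 0 := by linarith
      rcases mul_eq_zero.mp h3 with h5 | h5
      · linarith
      · exfalso; linarith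
    have hci : ({v : Fin n | c v = i} : Set (Fin n)) = ↑(Sf i) := by
      ext v; simp [hSf]
    have hcj : ({v : Fin n | c v = j} : Set (Fin n)) = ↑(Sf j) := by
      ext v; simp [hSf]
    rw [hci, hcj, Set.ncard_coe_finset, Set.ncard_coe_finset]
    have hij : a i = a j := by rw [hclass i, hclass j]
    have h5 : ((Sf i).card : ℝ) = ((Sf j).card : ℝ) := by simpa [ha] using hij
    exact_mod_cast h5
end

section
/- For every finite simple graph G and every positive integer d, the fractional d-improper chromatic number of the strong product of G with K_{d+1} equals the fractional chromatic number of G: χ_f^d(G ⊠ K_{d+1}) = χ_f(G). -/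
open SimpleGraph Finset Matrix

section AuxLemmas

open ImproperPaper

variable {α : Type*}

private lemma greedy_aux [Fintype α] (H : SimpleGraph α) (d : ℕ)
    (h : ∀ v : α, ({w | H.Adj v w} : Set α).ncard ≤ d) (s : Finset α) :
    ∃ g : α → Fin (d + 1), ∀ v ∈ s, ∀ w ∈ s, H.Adj v w → g v ≠ g w := by
  classical
  induction s using Finset.induction_on with
  | empty => exact ⟨fun _ => 0, by simp⟩
  | @insert a s ha ih =>
    obtain ⟨g, hg⟩ := ih
    set used : Finset (Fin (d + 1)) := (s.filter (fun w => H.Adj a w)).image g with hused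
    have hcard : used.card ≤ d := by
      refine le_trans Finset.card_image_le (le_trans ?_ (h a))
      rw [← Set.ncard_coe_finset]
      refine Set.ncard_le_ncard ?_ (Set.toFinite _)
      intro w hw
      simp only [Finset.coe_filter, Set.mem_setOf_eq] at hw
      exact hw.2
    have hne : (usedᶜ : Finset (Fin (d + 1))).Nonempty := by
      rw [← Finset.card_pos, Finset.card_compl]
      have : Fintype.card (Fin (d + 1)) = d + 1 := Fintype.card_fin _
      omega
    obtain ⟨col, hcol⟩ := hne
    rw [Finset.mem_compl] at hcol
    refine ⟨Function.update g a col, ?_⟩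
    have key : ∀ u ∈ s, Function.update g a col u = g u := by
      intro u hu
      refine Function.update_of_ne (fun hh => ha ?_) _ _
      rw [← hh]
      exact hu
    intro v hv w hw hvw
    rcases Finset.mem_insert.mp hv with hva | hv'
    · rcases Finset.mem_insert.mp hw with hwa | hw'
      · rw [hva, hwa] at hvw
        exact absurd hvw (H.irrefl)
      · rw [hva, Function.update_self, key w hw']
        intro hcontra
        have hmem : g w ∈ used := Finset.mem_image_of_mem g
          (Finset.mem_filter.mpr ⟨hw', by rw [hva] at hvw; exact hvw⟩)
        rw [← hcontra] at hmem
        exact hcol hmem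
    · rcases Finset.mem_insert.mp hw with hwa | hw'
      · rw [hwa, key v hv', Function.update_self]
        intro hcontra
        have hmem : g v ∈ used := Finset.mem_image_of_mem g
          (Finset.mem_filter.mpr ⟨hv', H.adj_symm (by rw [hwa] at hvw; exact hvw)⟩)
        rw [hcontra] at hmem
        exact hcol hmem
      · rw [key v hv', key w hw']
        exact hg v hv' w hw' hvw

private lemma exists_greedy_coloring [Fintype α] (H : SimpleGraph α) (d : ℕ)
    (h : ∀ v : α, ({w | H.Adj v w} : Set α).ncard ≤ d) :
    ∃ g : α → Fin (d + 1), ∀ v w, H.Adj v w → g v ≠ g w := by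
  obtain ⟨g, hg⟩ := greedy_aux H d h Finset.univ
  exact ⟨g, fun v w hvw => hg v (Finset.mem_univ v) w (Finset.mem_univ w) hvw⟩

private lemma improper_set_nonempty [Fintype α] (H : SimpleGraph α) (b d : ℕ) :
    {n | ∃ c : α → Finset (Fin n), (∀ v, (c v).card = b) ∧
      ∀ v : α, ∀ x ∈ c v, ({w | H.Adj v w ∧ x ∈ c w} : Set α).ncard ≤ d}.Nonempty := by
  classical
  have hinj : Function.Injective
      (fun p : α × Fin b => (finProdFinEquiv ((Fintype.equivFin α) p.1, p.2) : Fin (Fintype.card α * b))) := by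
    intro p q hpq
    have h2 := finProdFinEquiv.injective hpq
    have h3 := (Prod.ext_iff.mp h2).1
    have h4 := (Prod.ext_iff.mp h2).2
    exact Prod.ext ((Fintype.equivFin α).injective h3) h4
  refine ⟨Fintype.card α * b, fun v => Finset.univ.image
      (fun j : Fin b => finProdFinEquiv ((Fintype.equivFin α) v, j)), ?_, ?_⟩
  · intro v
    rw [Finset.card_image_of_injective _ (fun j j' h => by
      have := hinj (a₁ := (v, j)) (a₂ := (v, j')) h
      exact (Prod.ext_iff.mp this).2)]
    simp
  · intro v x hx
    have hempty : ({w | H.Adj v w ∧ x ∈ Finset.univ.image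
        (fun j : Fin b => (finProdFinEquiv ((Fintype.equivFin α) w, j) : Fin (Fintype.card α * b)))} : Set α)
        = (∅ : Set α) := by
      ext w
      simp only [Set.mem_setOf_eq, Set.mem_empty_iff_false, iff_false, not_and]
      intro hadj hxw
      obtain ⟨j, _, hj⟩ := Finset.mem_image.mp hxw
      obtain ⟨j', _, hj'⟩ := Finset.mem_image.mp hx
      have := hinj (a₁ := (w, j)) (a₂ := (v, j')) (hj.trans hj'.symm)
      have hvw : w = v := (Prod.ext_iff.mp this).1
      exact H.irrefl (hvw ▸ hadj)
    rw [hempty]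
    simp

variable {V : Type*} [Fintype V]

private lemma lemA (G : SimpleGraph V) (d b : ℕ) :
    bFoldImproperChromaticNumber (strongProd G (⊤ : SimpleGraph (Fin (d + 1)))) b d ≤
      bFoldImproperChromaticNumber G b 0 := by
  classical
  obtain ⟨c, hcard, hprop⟩ := Nat.sInf_mem (improper_set_nonempty G b 0)
  apply Nat.sInf_le
  refine ⟨fun p => c p.1, fun p => hcard p.1, ?_⟩
  rintro ⟨v, i⟩ x hx
  have hempty : ∀ w : V, ¬(G.Adj v w ∧ x ∈ c w) := by
    intro w hw
    have h0 := hprop v x hx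
    have h1 : ({w | G.Adj v w ∧ x ∈ c w} : Set V) = ∅ :=
      (Set.ncard_eq_zero (Set.toFinite _)).mp (Nat.le_zero.mp h0)
    exact absurd (show w ∈ (∅ : Set V) by rw [← h1]; exact hw) (Set.notMem_empty w)
  have hsub : ({q | (strongProd G (⊤ : SimpleGraph (Fin (d + 1)))).Adj (v, i) q ∧ x ∈ c q.1} :
      Set (V × Fin (d + 1))) ⊆ (fun j => (v, j)) '' ({i}ᶜ : Set (Fin (d + 1))) := by
    rintro ⟨w, j⟩ ⟨hadj, hxw⟩
    rcases hadj with ⟨h1, h2⟩ | ⟨h1, _⟩ | ⟨h1, _⟩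
    · refine ⟨j, ?_, ?_⟩
      · simp only [Set.mem_compl_iff, Set.mem_singleton_iff]
        exact fun hji => (h2 : i ≠ j) hji.symm
      · simp only at h1
        rw [h1]
    · exact absurd ⟨h1, hxw⟩ (hempty w)
    · exact absurd ⟨h1, hxw⟩ (hempty w)
  refine le_trans (Set.ncard_le_ncard hsub (Set.toFinite _)) ?_
  rw [Set.ncard_image_of_injective _ (fun j j' h => (Prod.ext_iff.mp h).2)]
  have h1 := Set.ncard_add_ncard_compl ({i} : Set (Fin (d + 1)))
  have h2 : ({i} : Set (Fin (d + 1))).ncard = 1 := Set.ncard_singleton i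
  have h3 : Nat.card (Fin (d + 1)) = d + 1 := by simp
  omega

private lemma lemB (G : SimpleGraph V) (d b : ℕ) :
    bFoldImproperChromaticNumber G ((d + 1) * b) 0 ≤
      (d + 1) * bFoldImproperChromaticNumber (strongProd G (⊤ : SimpleGraph (Fin (d + 1)))) b d := by
  classical
  set P := strongProd G (⊤ : SimpleGraph (Fin (d + 1))) with hP
  set n := bFoldImproperChromaticNumber P b d with hn
  obtain ⟨c, hcard, himp⟩ : ∃ c : V × Fin (d + 1) → Finset (Fin n), (∀ v, (c v).card = b) ∧
      ∀ v, ∀ x ∈ c v, ({w | P.Adj v w ∧ x ∈ c w} : Set (V × Fin (d + 1))).ncard ≤ d :=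
    Nat.sInf_mem (improper_set_nonempty P b d)
  have hex : ∀ x : Fin n, ∃ g : V × Fin (d + 1) → Fin (d + 1),
      ∀ p q, P.Adj p q → x ∈ c p → x ∈ c q → g p ≠ g q := by
    intro x
    let Hx : SimpleGraph (V × Fin (d + 1)) :=
      { Adj := fun p q => P.Adj p q ∧ x ∈ c p ∧ x ∈ c q
        symm := ⟨fun p q h => ⟨h.1.symm, h.2.2, h.2.1⟩⟩
        loopless := ⟨fun p h => P.irrefl h.1⟩ }
    have hdeg : ∀ p, ({q | Hx.Adj p q} : Set (V × Fin (d + 1))).ncard ≤ d := by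
      intro p
      by_cases hp : x ∈ c p
      · refine le_trans (Set.ncard_le_ncard ?_ (Set.toFinite _)) (himp p x hp)
        rintro q ⟨h1, _, h3⟩
        exact ⟨h1, h3⟩
      · have he : ({q | Hx.Adj p q} : Set (V × Fin (d + 1))) = ∅ := by
          ext q
          simp only [Set.mem_setOf_eq, Set.mem_empty_iff_false, iff_false]
          rintro ⟨_, h2, _⟩
          exact hp h2
        rw [he]; simp
    obtain ⟨g, hg⟩ := exists_greedy_coloring Hx d hdeg
    exact ⟨g, fun p q h1 h2 h3 => hg p q ⟨h1, h2, h3⟩⟩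
  choose g hg using hex
  set D : V → Finset (Fin n × Fin (d + 1)) := fun v =>
    Finset.univ.biUnion (fun i : Fin (d + 1) => (c (v, i)).image (fun x => (x, g x (v, i)))) with hD
  have hDcard : ∀ v, (D v).card = (d + 1) * b := by
    intro v
    rw [hD]
    rw [Finset.card_biUnion]
    · have heach : ∀ i : Fin (d + 1),
          ((c (v, i)).image (fun x => (x, g x (v, i)))).card = b := by
        intro i
        rw [Finset.card_image_of_injective _ (fun x y h => (Prod.ext_iff.mp h).1), hcard]
      rw [Finset.sum_congr rfl (fun i _ => heach i), Finset.sum_const, Finset.card_univ,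
        Fintype.card_fin, smul_eq_mul]
    · intro i _ i' _ hii
      rw [Function.onFun, Finset.disjoint_left]
      rintro ⟨x, j⟩ hmem1 hmem2
      obtain ⟨x1, hx1, he1⟩ := Finset.mem_image.mp hmem1
      obtain ⟨x2, hx2, he2⟩ := Finset.mem_image.mp hmem2
      obtain rfl : x1 = x2 := ((Prod.ext_iff.mp he1).1).trans ((Prod.ext_iff.mp he2).1).symm
      have hadj : P.Adj (v, i) (v, i') := Or.inl ⟨rfl, by simpa using hii⟩
      exact hg x1 (v, i) (v, i') hadj hx1 hx2
        (((Prod.ext_iff.mp he1).2).trans ((Prod.ext_iff.mp he2).2).symm)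
  have hDproper : ∀ v w, G.Adj v w → ∀ y, y ∈ D v → y ∉ D w := by
    intro v w hvw y hyv hyw
    obtain ⟨x, j⟩ := y
    rw [hD] at hyv hyw
    simp only [Finset.mem_biUnion, Finset.mem_univ, true_and] at hyv hyw
    obtain ⟨i, hi⟩ := hyv
    obtain ⟨i', hi'⟩ := hyw
    obtain ⟨x1, hx1, he1⟩ := Finset.mem_image.mp hi
    obtain ⟨x2, hx2, he2⟩ := Finset.mem_image.mp hi'
    obtain rfl : x1 = x2 := ((Prod.ext_iff.mp he1).1).trans ((Prod.ext_iff.mp he2).1).symm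
    have hadj : P.Adj (v, i) (w, i') := by
      by_cases hii : i = i'
      · exact Or.inr (Or.inl ⟨hvw, hii⟩)
      · exact Or.inr (Or.inr ⟨hvw, by simpa using hii⟩)
    exact hg x1 (v, i) (w, i') hadj hx1 hx2
      (((Prod.ext_iff.mp he1).2).trans ((Prod.ext_iff.mp he2).2).symm)
  have hmem2 : n * (d + 1) ∈ {m | ∃ C : V → Finset (Fin m), (∀ v, (C v).card = (d + 1) * b) ∧
      ∀ v : V, ∀ y ∈ C v, ({w | G.Adj v w ∧ y ∈ C w} : Set V).ncard ≤ 0} := by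
    refine ⟨fun v => (D v).image finProdFinEquiv, ?_, ?_⟩
    · intro v
      rw [Finset.card_image_of_injective _ finProdFinEquiv.injective, hDcard]
    · intro v y hyv
      have hemp : ({w | G.Adj v w ∧ y ∈ (D w).image finProdFinEquiv} : Set V) = ∅ := by
        ext w
        simp only [Set.mem_setOf_eq, Set.mem_empty_iff_false, iff_false, not_and]
        intro hvw hyw
        obtain ⟨z, hz, hez⟩ := Finset.mem_image.mp hyv
        obtain ⟨z', hz', hez'⟩ := Finset.mem_image.mp hyw
        have hzz : z' = z := finProdFinEquiv.injective (hez'.trans hez.symm)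
        subst hzz
        exact hDproper v w hvw z' hz hz'
      rw [hemp]
      simp
  calc bFoldImproperChromaticNumber G ((d + 1) * b) 0 ≤ n * (d + 1) := Nat.sInf_le hmem2
    _ = (d + 1) * n := Nat.mul_comm n (d + 1)

end AuxLemmas


open ImproperPaper in

theorem stmt_5 {V : Type*} [Fintype V] (G : SimpleGraph V) (d : ℕ) (hd : 0 < d) :
    fracImproperChromaticNumber (strongProd G (⊤ : SimpleGraph (Fin (d + 1)))) d =
      fracChromaticNumber G := by
  classical
  set P := strongProd G (⊤ : SimpleGraph (Fin (d + 1))) with hP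
  have hAne : {x : ℝ | ∃ b : ℕ, 0 < b ∧
      x = (bFoldImproperChromaticNumber P b d : ℝ) / b}.Nonempty :=
    ⟨_, 1, one_pos, rfl⟩
  have hBne : {x : ℝ | ∃ b : ℕ, 0 < b ∧
      x = (bFoldChromaticNumber G b : ℝ) / b}.Nonempty :=
    ⟨_, 1, one_pos, rfl⟩
  have hAbdd : BddBelow {x : ℝ | ∃ b : ℕ, 0 < b ∧
      x = (bFoldImproperChromaticNumber P b d : ℝ) / b} := by
    refine ⟨0, ?_⟩
    rintro x ⟨b, hb, rfl⟩
    positivity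
  have hBbdd : BddBelow {x : ℝ | ∃ b : ℕ, 0 < b ∧
      x = (bFoldChromaticNumber G b : ℝ) / b} := by
    refine ⟨0, ?_⟩
    rintro x ⟨b, hb, rfl⟩
    positivity
  show sInf _ = sInf _
  apply le_antisymm
  · refine le_csInf hBne ?_
    rintro y ⟨b, hb, rfl⟩
    refine csInf_le_of_le hAbdd ⟨b, hb, rfl⟩ ?_
    have hle := lemA G d b
    have hbR : (0 : ℝ) < b := by exact_mod_cast hb
    unfold bFoldChromaticNumber
    gcongr
  · refine le_csInf hAne ?_
    rintro x ⟨b, hb, rfl⟩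
    have hb1 : 0 < (d + 1) * b := Nat.mul_pos (Nat.succ_pos d) hb
    refine csInf_le_of_le hBbdd ⟨(d + 1) * b, hb1, rfl⟩ ?_
    have hle := lemB G d b
    have hbR : (0 : ℝ) < b := by exact_mod_cast hb
    have hd1 : ((d : ℝ) + 1) ≠ 0 := by positivity
    calc (bFoldChromaticNumber G ((d + 1) * b) : ℝ) / (((d + 1) * b : ℕ) : ℝ)
        ≤ (((d + 1) * bFoldImproperChromaticNumber P b d : ℕ) : ℝ) / (((d + 1) * b : ℕ) : ℝ) := by
          gcongr
          exact_mod_cast hle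
      _ = (bFoldImproperChromaticNumber P b d : ℝ) / b := by
          push_cast
          rw [mul_div_mul_left _ _ hd1]
end

section
/- For every finite simple graph G and all integers d ≥ 0 and b ≥ 1, the b-fold d-improper chromatic number of G ⊠ K_{d+1} equals the d-improper chromatic number of G ⊠ K_{d+1} ⊠ K_b: χ_b^d(G ⊠ K_{d+1}) = χ^d(G ⊠ K_{d+1} ⊠ K_b). -/
open SimpleGraph Finset Matrix

namespace ImproperAux
open ImproperPaper

variable {V : Type*}

lemma sp_top_adj {β : Type*} (A : SimpleGraph V) (p q : V × β) :
    (strongProd A (⊤ : SimpleGraph β)).Adj p q ↔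
      (p.1 = q.1 ∧ p.2 ≠ q.2) ∨ A.Adj p.1 q.1 := by
  show (p.1 = q.1 ∧ (⊤ : SimpleGraph β).Adj p.2 q.2) ∨
      (A.Adj p.1 q.1 ∧ p.2 = q.2) ∨ (A.Adj p.1 q.1 ∧ (⊤ : SimpleGraph β).Adj p.2 q.2) ↔ _
  simp only [SimpleGraph.top_adj]
  constructor
  · rintro (⟨h1, h2⟩ | ⟨h1, _⟩ | ⟨h1, _⟩)
    · exact Or.inl ⟨h1, h2⟩
    · exact Or.inr h1
    · exact Or.inr h1
  · rintro (⟨h1, h2⟩ | h)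
    · exact Or.inl ⟨h1, h2⟩
    · by_cases h2 : p.2 = q.2
      · exact Or.inr (Or.inl ⟨h, h2⟩)
      · exact Or.inr (Or.inr ⟨h, h2⟩)

section

variable {d b n : ℕ}

/-- position of the `j`-th slot of residue class `a` in `Fin ((d+1)*b)`. -/
def posF (d b : ℕ) (a : Fin (d + 1)) (j : Fin b) : Fin ((d + 1) * b) :=
  ⟨a.1 + (d + 1) * j.1, by
    have ha := a.isLt
    have hj : j.1 + 1 ≤ b := j.isLt
    calc a.1 + (d + 1) * j.1 < (d + 1) + (d + 1) * j.1 := by omega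
      _ = (d + 1) * (j.1 + 1) := by ring
      _ ≤ (d + 1) * b := Nat.mul_le_mul_left _ hj⟩

lemma posF_mod (a : Fin (d + 1)) (j : Fin b) :
    ((posF d b a j : Fin ((d + 1) * b)) : ℕ) % (d + 1) = a.1 := by
  show (a.1 + (d + 1) * j.1) % (d + 1) = a.1
  rw [Nat.add_mul_mod_self_left]
  exact Nat.mod_eq_of_lt a.isLt

variable (c : (V × Fin (d + 1)) × Fin b → Fin n)

/-- the colouring of the fibre over `u`, as a function on `Fin ((d+1)*b)`. -/
def fibC (u : V) : Fin ((d + 1) * b) → Fin n := fun k =>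
  c ((u, (finProdFinEquiv.symm k).1), (finProdFinEquiv.symm k).2)

/-- a permutation sorting the fibre colouring. -/
def perm (u : V) : Equiv.Perm (Fin ((d + 1) * b)) := Tuple.sort (fibC c u)

/-- the sorted fibre colouring. -/
def hC (u : V) : Fin ((d + 1) * b) → Fin n := fibC c u ∘ ⇑(perm c u)

/-- the vertex at sorted position `k` of the fibre over `u`. -/
def vtx (u : V) (k : Fin ((d + 1) * b)) : (V × Fin (d + 1)) × Fin b :=
  ((u, (finProdFinEquiv.symm (perm c u k)).1), (finProdFinEquiv.symm (perm c u k)).2)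

lemma c_vtx (u : V) (k : Fin ((d + 1) * b)) : c (vtx c u k) = hC c u k := rfl

lemma vtx_inj (u : V) : Function.Injective (vtx c u) := by
  intro k k' h
  have e1 : (finProdFinEquiv.symm (perm c u k)).1 = (finProdFinEquiv.symm (perm c u k')).1 :=
    congrArg (fun z => z.1.2) h
  have e2 : (finProdFinEquiv.symm (perm c u k)).2 = (finProdFinEquiv.symm (perm c u k')).2 :=
    congrArg (fun z => z.2) h
  exact (perm c u).injective (finProdFinEquiv.symm.injective (Prod.ext e1 e2))

lemma hC_mono (u : V) : Monotone (hC c u) := Tuple.monotone_sort _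

variable (G : SimpleGraph V)

lemma fiber_adj (u : V) {p q : Fin (d + 1) × Fin b} (hpq : p ≠ q) :
    (strongProd (strongProd G (⊤ : SimpleGraph (Fin (d + 1)))) (⊤ : SimpleGraph (Fin b))).Adj
      ((u, p.1), p.2) ((u, q.1), q.2) := by
  rw [sp_top_adj]
  by_cases h1 : p.1 = q.1
  · exact Or.inl ⟨by rw [h1], fun h2 => hpq (Prod.ext h1 h2)⟩
  · exact Or.inr ((sp_top_adj G _ _).mpr (Or.inl ⟨rfl, h1⟩))

variable [Fintype V]

lemma run_le
    (hc : IsImproperColoring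
      (strongProd (strongProd G (⊤ : SimpleGraph (Fin (d + 1)))) (⊤ : SimpleGraph (Fin b))) d c)
    (u : V) {k k' : Fin ((d + 1) * b)} (hk : k ≤ k') (hx : hC c u k = hC c u k') :
    (k' : ℕ) - (k : ℕ) ≤ d := by
  have hO := hc (vtx c u k)
  rw [← Fin.card_Ioc k k', ← Set.ncard_coe_finset]
  refine le_trans (Set.ncard_le_ncard_of_injOn (vtx c u) ?_ ((vtx_inj c u).injOn)
    (Set.toFinite _)) hO
  intro j hj
  simp only [Finset.coe_Ioc, Set.mem_Ioc] at hj
  have hkj : k ≠ j := ne_of_lt hj.1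
  constructor
  · exact fiber_adj G u
      (fun h => hkj ((perm c u).injective (finProdFinEquiv.symm.injective h)))
  · show hC c u j = hC c u k
    refine le_antisymm ?_ (hC_mono c u (le_of_lt hj.1))
    rw [hx]
    exact hC_mono c u hj.2

lemma eq_of_res
    (hc : IsImproperColoring
      (strongProd (strongProd G (⊤ : SimpleGraph (Fin (d + 1)))) (⊤ : SimpleGraph (Fin b))) d c)
    (u : V) {k k' : Fin ((d + 1) * b)}
    (hres : (k : ℕ) % (d + 1) = (k' : ℕ) % (d + 1)) (hx : hC c u k = hC c u k') : k = k' := by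
  have key : ∀ a a' : Fin ((d + 1) * b), a ≤ a' → (a : ℕ) % (d + 1) = (a' : ℕ) % (d + 1) →
      hC c u a = hC c u a' → a = a' := by
    intro a a' hle hr hcc
    have h1 : (a' : ℕ) - (a : ℕ) ≤ d := run_le c G hc u hle hcc
    have h2 : (d + 1) ∣ (a' : ℕ) - (a : ℕ) := (Nat.modEq_iff_dvd' hle).mp hr
    have h3 : (a' : ℕ) - (a : ℕ) = 0 := Nat.eq_zero_of_dvd_of_lt h2 (by omega)
    have hle' : (a : ℕ) ≤ (a' : ℕ) := hle
    exact Fin.ext (by omega)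
  rcases le_total k k' with h | h
  · exact key k k' h hres hx
  · exact (key k' k h hres.symm hx.symm).symm

lemma hard (hb : 1 ≤ b)
    (hc : IsImproperColoring
      (strongProd (strongProd G (⊤ : SimpleGraph (Fin (d + 1)))) (⊤ : SimpleGraph (Fin b))) d c) :
    ∃ c' : V × Fin (d + 1) → Finset (Fin n), (∀ v, (c' v).card = b) ∧
      ∀ v : V × Fin (d + 1), ∀ x ∈ c' v,
        ({w | (strongProd G (⊤ : SimpleGraph (Fin (d + 1)))).Adj v w ∧ x ∈ c' w} :
          Set (V × Fin (d + 1))).ncard ≤ d := by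
  classical
  refine ⟨fun v => Finset.image (fun j : Fin b => hC c v.1 (posF d b v.2 j)) Finset.univ, ?_, ?_⟩
  · intro v
    have hinj : Function.Injective (fun j : Fin b => hC c v.1 (posF d b v.2 j)) := by
      intro j j' h
      have hp : posF d b v.2 j = posF d b v.2 j' :=
        eq_of_res c G hc v.1 (by rw [posF_mod, posF_mod]) h
      have hval : v.2.1 + (d + 1) * j.1 = v.2.1 + (d + 1) * j'.1 := congrArg Fin.val hp
      have hj : j.1 = j'.1 :=
        Nat.eq_of_mul_eq_mul_left (Nat.succ_pos d) (Nat.add_left_cancel hval)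
      exact Fin.ext hj
    rw [Finset.card_image_of_injective _ hinj, Finset.card_univ, Fintype.card_fin]
  · rintro ⟨u, a⟩ x hx
    simp only [Finset.mem_image, Finset.mem_univ, true_and] at hx
    obtain ⟨j₀, hj₀⟩ := hx
    have hO := hc (vtx c u (posF d b a j₀))
    have hbase : c (vtx c u (posF d b a j₀)) = x := hj₀
    rw [hbase] at hO
    refine le_trans (Set.ncard_le_ncard_of_injOn
      (fun w' => vtx c w'.1 (posF d b w'.2
        (if h' : ∃ j, hC c w'.1 (posF d b w'.2 j) = x then h'.choose else ⟨0, hb⟩)))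
      ?_ ?_ (Set.toFinite _)) hO
    · rintro ⟨u', a'⟩ ⟨hadj, hx'⟩
      simp only [Finset.mem_image, Finset.mem_univ, true_and] at hx'
      simp only [dif_pos hx']
      have hj₁ : hC c u' (posF d b a' hx'.choose) = x := hx'.choose_spec
      constructor
      · rcases (sp_top_adj G (u, a) (u', a')).mp hadj with ⟨h1, h2⟩ | hG
        · simp only at h1 h2
          subst h1
          refine fiber_adj G u ?_
          intro hP
          have hkk : posF d b a j₀ = posF d b a' hx'.choose :=
            (perm c u).injective (finProdFinEquiv.symm.injective hP)
          have := congrArg (fun k : Fin ((d + 1) * b) => (k : ℕ) % (d + 1)) hkk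
          simp only [posF_mod] at this
          exact h2 (Fin.ext this)
        · rw [sp_top_adj]
          right
          rw [sp_top_adj]
          right
          exact hG
      · exact hj₁
    · rintro ⟨u₁, a₁⟩ h₁ ⟨u₂, a₂⟩ h₂ hf
      simp only at hf
      have hu : u₁ = u₂ := congrArg (fun z => z.1.1) hf
      subst hu
      have hk := vtx_inj c u₁ hf
      have hres := congrArg (fun k : Fin ((d + 1) * b) => (k : ℕ) % (d + 1)) hk
      simp only [posF_mod] at hres
      exact Prod.ext rfl (Fin.ext hres)

lemma easy
    (c' : V × Fin (d + 1) → Finset (Fin n)) (hcard : ∀ v, (c' v).card = b)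
    (himp : ∀ v : V × Fin (d + 1), ∀ x ∈ c' v,
      ({w | (strongProd G (⊤ : SimpleGraph (Fin (d + 1)))).Adj v w ∧ x ∈ c' w} :
        Set (V × Fin (d + 1))).ncard ≤ d) :
    ∃ cc : (V × Fin (d + 1)) × Fin b → Fin n,
      IsImproperColoring
        (strongProd (strongProd G (⊤ : SimpleGraph (Fin (d + 1)))) (⊤ : SimpleGraph (Fin b)))
        d cc := by
  refine ⟨fun z => (((c' z.1).orderIsoOfFin (hcard z.1)) z.2).1, ?_⟩
  rintro ⟨w, i⟩
  set x : Fin n := (((c' w).orderIsoOfFin (hcard w)) i).1 with hxdef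
  have hxmem : x ∈ c' w := (((c' w).orderIsoOfFin (hcard w)) i).2
  refine le_trans (Set.ncard_le_ncard_of_injOn Prod.fst ?_ ?_ (Set.toFinite _)) (himp w x hxmem)
  · rintro ⟨w', i'⟩ ⟨hadj, hcol⟩
    have hcol' : (((c' w').orderIsoOfFin (hcard w')) i').1 = x := hcol
    have hG : (strongProd G (⊤ : SimpleGraph (Fin (d + 1)))).Adj w w' := by
      rcases (sp_top_adj _ (w, i) (w', i')).mp hadj with ⟨h1, h2⟩ | h
      · exfalso
        simp only at h1 h2
        subst h1
        have : i' = i :=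
          ((c' w).orderIsoOfFin (hcard w)).injective (Subtype.coe_injective hcol')
        exact h2 this.symm
      · exact h
    refine ⟨hG, ?_⟩
    rw [← hcol']
    exact (((c' w').orderIsoOfFin (hcard w')) i').2
  · rintro ⟨w₁, i₁⟩ hz₁ ⟨w₂, i₂⟩ hz₂ hfst
    simp only at hfst
    subst hfst
    have h1 : (((c' w₁).orderIsoOfFin (hcard w₁)) i₁).1 = x := hz₁.2
    have h2 : (((c' w₁).orderIsoOfFin (hcard w₁)) i₂).1 = x := hz₂.2
    have : i₁ = i₂ :=
      ((c' w₁).orderIsoOfFin (hcard w₁)).injective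
        (Subtype.coe_injective (h1.trans h2.symm))
    rw [this]

end
end ImproperAux

open ImproperPaper in

theorem stmt_7 {V : Type*} [Fintype V] (G : SimpleGraph V) (d b : ℕ) (hb : 1 ≤ b) :
    bFoldImproperChromaticNumber (strongProd G (⊤ : SimpleGraph (Fin (d + 1)))) b d =
      improperChromaticNumber
        (strongProd (strongProd G (⊤ : SimpleGraph (Fin (d + 1))))
          (⊤ : SimpleGraph (Fin b))) d := by
  unfold bFoldImproperChromaticNumber improperChromaticNumber
  congr 1
  ext n
  simp only [Set.mem_setOf_eq]
  constructor
  · rintro ⟨c', hcard, himp⟩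
    exact ImproperAux.easy G c' hcard himp
  · rintro ⟨c, hc⟩
    exact ImproperAux.hard c G hb hc
end

section
/- Let H be a finite simple graph on k vertices. Then for every finite simple graph G and every integer t ≥ k, the t-clustered chromatic number of the lexicographical product G[H] equals that of the strong product G ⊠ K_k: χ^{\underline{t}}(G[H]) = χ^{\underline{t}}(G ⊠ K_k). -/
open SimpleGraph Finset Matrix

open ImproperPaper

section Aux

variable {V W : Type*}

lemma lexProd_adj' {G : SimpleGraph V} {H : SimpleGraph W} {p q : V × W} :
    (lexProd G H).Adj p q ↔ G.Adj p.1 q.1 ∨ (p.1 = q.1 ∧ H.Adj p.2 q.2) := Iff.rfl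

lemma strongProd_top_eq (G : SimpleGraph V) (k : ℕ) :
    strongProd G (⊤ : SimpleGraph (Fin k)) = lexProd G (⊤ : SimpleGraph (Fin k)) := by
  ext ⟨a, b⟩ ⟨x, y⟩
  show (a = x ∧ (⊤ : SimpleGraph (Fin k)).Adj b y) ∨ (G.Adj a x ∧ b = y) ∨
      (G.Adj a x ∧ (⊤ : SimpleGraph (Fin k)).Adj b y) ↔
      G.Adj a x ∨ (a = x ∧ (⊤ : SimpleGraph (Fin k)).Adj b y)
  simp only [SimpleGraph.top_adj]
  constructor
  · tauto
  · rintro (h | ⟨h1, h2⟩)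
    · by_cases hb : b = y <;> tauto
    · tauto

variable [Fintype V] [Fintype W]

lemma lex_clustered_of_top {G : SimpleGraph V} {H : SimpleGraph W} {k t n : ℕ}
    (φ : W ≃ Fin k) (c : V × Fin k → Fin n)
    (hc : IsClusteredColoring (lexProd G (⊤ : SimpleGraph (Fin k))) t c) :
    IsClusteredColoring (lexProd G H) t (fun a => c (a.1, φ a.2)) := by
  intro v
  set f : V × W → V × Fin k := fun a => (a.1, φ a.2) with hf
  have hinj : Function.Injective f := by
    intro a b h
    simp only [f, Prod.mk.injEq] at h
    exact Prod.ext h.1 (φ.injective h.2)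
  have hsub : f '' {w | Relation.ReflTransGen
        (fun a b => (lexProd G H).Adj a b ∧ c (f a) = c (f b)) v w}
      ⊆ {w | Relation.ReflTransGen
        (fun a b => (lexProd G (⊤ : SimpleGraph (Fin k))).Adj a b ∧ c a = c b) (f v) w} := by
    rintro _ ⟨w, hw, rfl⟩
    refine Relation.ReflTransGen.lift f (fun a b (hab : (lexProd G H).Adj a b ∧ c (f a) = c (f b)) => (⟨?_, hab.2⟩ : (lexProd G (⊤ : SimpleGraph (Fin k))).Adj (f a) (f b) ∧ c (f a) = c (f b))) _ _ hw
    rcases lexProd_adj'.mp hab.1 with hG | ⟨heq, hH⟩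
    · exact Or.inl hG
    · exact Or.inr ⟨heq, fun h => H.ne_of_adj hH (φ.injective h)⟩
  calc ({w | Relation.ReflTransGen
        (fun a b => (lexProd G H).Adj a b ∧ c (f a) = c (f b)) v w} : Set (V × W)).ncard
      = (f '' {w | Relation.ReflTransGen
        (fun a b => (lexProd G H).Adj a b ∧ c (f a) = c (f b)) v w}).ncard :=
        (Set.ncard_image_of_injective _ hinj).symm
    _ ≤ ({w | Relation.ReflTransGen
        (fun a b => (lexProd G (⊤ : SimpleGraph (Fin k))).Adj a b ∧ c a = c b)
          (f v) w} : Set (V × Fin k)).ncard := Set.ncard_le_ncard hsub (Set.toFinite _)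
    _ ≤ t := hc (f v)

lemma top_clustered_of_lex {G : SimpleGraph V} {H : SimpleGraph W} {k t n : ℕ}
    (hkt : k ≤ t) (φ : W ≃ Fin k) (c : V × W → Fin n)
    (hc : IsClusteredColoring (lexProd G H) t c) :
    IsClusteredColoring (lexProd G (⊤ : SimpleGraph (Fin k))) t
      (fun a => c (a.1, φ.symm a.2)) := by
  classical
  intro p
  set g : V × Fin k → V × W := fun a => (a.1, φ.symm a.2) with hg
  have hginj : Function.Injective g := by
    intro a b h
    simp only [g, Prod.mk.injEq] at h
    exact Prod.ext h.1 (φ.symm.injective h.2)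
  set r : V × Fin k → V × Fin k → Prop := fun a b =>
    (lexProd G (⊤ : SimpleGraph (Fin k))).Adj a b ∧ c (g a) = c (g b) with hrdef
  show ({w | Relation.ReflTransGen r p w} : Set (V × Fin k)).ncard ≤ t
  set C := {w | Relation.ReflTransGen r p w} with hCdef
  have hrsymm : ∀ a b, r a b → r b a := fun a b hab => ⟨hab.1.symm, hab.2.symm⟩
  have hsym : ∀ a b : V × Fin k, Relation.ReflTransGen r a b →
      Relation.ReflTransGen r b a := by
    intro a b h
    induction h with
    | refl => exact Relation.ReflTransGen.refl
    | tail h1 h2 ih => exact Relation.ReflTransGen.head (hrsymm _ _ h2) ih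
  have hcol : ∀ q ∈ C, c (g q) = c (g p) := by
    intro q hq
    induction hq with
    | refl => rfl
    | tail h1 h2 ih => exact h2.2.symm.trans ih
  by_cases hall : ∀ q ∈ C, q.1 = p.1
  · have hsub : C ⊆ (fun i : Fin k => (p.1, i)) '' Set.univ := by
      intro q hq
      refine ⟨q.2, trivial, ?_⟩
      show (p.1, q.2) = q
      rw [← hall q hq]
    have hki : Function.Injective (fun i : Fin k => (p.1, i)) := by
      intro i j h
      simpa using congrArg Prod.snd h
    calc C.ncard ≤ ((fun i : Fin k => (p.1, i)) '' Set.univ).ncard :=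
          Set.ncard_le_ncard hsub (Set.toFinite _)
      _ = (Set.univ : Set (Fin k)).ncard := Set.ncard_image_of_injective _ hki
      _ = k := by simp [Set.ncard_univ]
      _ ≤ t := hkt
  · push_neg at hall
    obtain ⟨q0, hq0C, hq0⟩ := hall
    have hcross : ∀ v : V, (∃ a ∈ C, a.1 = v) → ∃ b ∈ C, G.Adj v b.1 := by
      rintro v ⟨a, haC, hav⟩
      obtain ⟨q1, hq1C, hq1v⟩ : ∃ q1 ∈ C, q1.1 ≠ v := by
        by_cases hv : q0.1 = v
        · exact ⟨p, Relation.ReflTransGen.refl, fun h => hq0 (hv.trans h.symm)⟩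
        · exact ⟨q0, hq0C, hv⟩
      have hpath : Relation.ReflTransGen r a q1 :=
        Relation.ReflTransGen.trans (hsym _ _ haC) hq1C
      have key : ∀ x : V × Fin k, Relation.ReflTransGen r x q1 → x ∈ C → x.1 = v →
          ∃ b ∈ C, G.Adj v b.1 := by
        intro x hxpath
        induction hxpath using Relation.ReflTransGen.head_induction_on with
        | refl => exact fun _ hxv => absurd hxv hq1v
        | @head x m hstep hrest ih =>
          intro hxC hxv
          have hmC : m ∈ C := hxC.tail hstep
          by_cases hm : m.1 = v
          · exact ih hmC hm
          · rcases lexProd_adj'.mp hstep.1 with hG | ⟨heq, _⟩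
            · exact ⟨m, hmC, hxv ▸ hG⟩
            · exact absurd (heq ▸ hxv) hm
      exact key a hpath haC hav
    have hmain : ∀ q ∈ C, Relation.ReflTransGen
        (fun a b => (lexProd G H).Adj a b ∧ c a = c b) (g p) (g q) := by
      intro q hq
      induction hq with
      | refl => exact Relation.ReflTransGen.refl
      | @tail b q hpb hstep ih =>
        have hbC : b ∈ C := hpb
        have hqC : q ∈ C := hpb.tail hstep
        rcases lexProd_adj'.mp hstep.1 with hG | ⟨heq, _⟩
        · exact ih.tail ⟨Or.inl hG, hstep.2⟩
        · obtain ⟨s, hsC, hadj⟩ := hcross b.1 ⟨b, hbC, rfl⟩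
          have step1 : (lexProd G H).Adj (g b) (g s) ∧ c (g b) = c (g s) := by
            refine ⟨Or.inl ?_, (hcol b hbC).trans (hcol s hsC).symm⟩
            show G.Adj b.1 s.1
            exact hadj
          have step2 : (lexProd G H).Adj (g s) (g q) ∧ c (g s) = c (g q) := by
            refine ⟨Or.inl ?_, (hcol s hsC).trans (hcol q hqC).symm⟩
            show G.Adj s.1 q.1
            exact (heq ▸ hadj).symm
          exact ih.trans (Relation.ReflTransGen.head step1
            (Relation.ReflTransGen.single step2))
    have hsub : g '' C ⊆ {w | Relation.ReflTransGen
        (fun a b => (lexProd G H).Adj a b ∧ c a = c b) (g p) w} := by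
      rintro _ ⟨q, hq, rfl⟩
      exact hmain q hq
    calc C.ncard = (g '' C).ncard := (Set.ncard_image_of_injective _ hginj).symm
      _ ≤ ({w | Relation.ReflTransGen
          (fun a b => (lexProd G H).Adj a b ∧ c a = c b) (g p) w} : Set (V × W)).ncard :=
            Set.ncard_le_ncard hsub (Set.toFinite _)
      _ ≤ t := hc (g p)

end Aux

theorem stmt_9 {V W : Type*} [Fintype V] [Fintype W] (G : SimpleGraph V)
    (H : SimpleGraph W) (k t : ℕ) (hk : Fintype.card W = k) (hkt : k ≤ t) :
    clusteredChromaticNumber (lexProd G H) t =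
      clusteredChromaticNumber (strongProd G (⊤ : SimpleGraph (Fin k))) t := by
  classical
  obtain ⟨φ⟩ : Nonempty (W ≃ Fin k) := ⟨Fintype.equivFinOfCardEq hk⟩
  rw [strongProd_top_eq]
  unfold clusteredChromaticNumber
  congr 1
  ext n
  simp only [Set.mem_setOf_eq]
  constructor
  · rintro ⟨c, hc⟩
    exact ⟨fun a => c (a.1, φ.symm a.2), top_clustered_of_lex hkt φ c hc⟩
  · rintro ⟨c, hc⟩
    exact ⟨fun a => c (a.1, φ a.2), lex_clustered_of_top φ c hc⟩
end

section
/- Let G be a finite simple graph on n ≥ 1 vertices with at least one edge that admits a Hoffman colouring, i.e. χ(G) = 1 − λ₁(G)/λₙ(G). Then for every integer d ≥ 0, the strong product G ⊠ K_{d+1} admits a d-improper Hoffman colouring; that is, χ^d(G ⊠ K_{d+1}) = (Λ₁ − Λ_N)/(d − Λ_N), where Λ₁ and Λ_N are the largest and smallest adjacency eigenvalues of G ⊠ K_{d+1}. Moreover χ^d(G ⊠ K_{d+1}) = χ(G). -/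
open SimpleGraph Finset Matrix

namespace HoffmanAux

open Matrix

variable {m : Type*} [Fintype m] [DecidableEq m]

lemma dot_mulVec_left (U : Matrix m m ℝ) (a b : m → ℝ) :
    a ⬝ᵥ (U *ᵥ b) = (star U *ᵥ a) ⬝ᵥ b := by
  rw [Matrix.dotProduct_mulVec, Matrix.star_eq_conjTranspose,
    Matrix.conjTranspose_eq_transpose_of_trivial]
  congr 1
  rw [← Matrix.vecMul_transpose, Matrix.transpose_transpose]

lemma spec_decomp {M : Matrix m m ℝ} (hM : M.IsHermitian) :
    M = (hM.eigenvectorUnitary : Matrix m m ℝ) * Matrix.diagonal hM.eigenvalues *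
      star (hM.eigenvectorUnitary : Matrix m m ℝ) := by
  have h := hM.spectral_theorem
  rwa [RCLike.ofReal_real_eq_id, Function.id_comp] at h

lemma dot_self_nonneg (v : m → ℝ) : 0 ≤ v ⬝ᵥ v :=
  Finset.sum_nonneg fun i _ => mul_self_nonneg _

lemma dot_self_pos {v : m → ℝ} (hv : v ≠ 0) : 0 < v ⬝ᵥ v :=
  lt_of_le_of_ne (dot_self_nonneg v)
    (fun h => hv (dotProduct_self_eq_zero.mp h.symm))

lemma quad_repr {M : Matrix m m ℝ} (hM : M.IsHermitian) (x : m → ℝ) :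
    ∃ y : m → ℝ, x ⬝ᵥ (M *ᵥ x) = ∑ i, hM.eigenvalues i * y i ^ 2 ∧
      x ⬝ᵥ x = ∑ i, y i ^ 2 := by
  set U := (hM.eigenvectorUnitary : Matrix m m ℝ) with hU
  have hUs : U * star U = 1 := hM.eigenvectorUnitary.2.2
  refine ⟨star U *ᵥ x, ?_, ?_⟩
  · conv_lhs => rw [spec_decomp hM, ← hU, ← Matrix.mulVec_mulVec, ← Matrix.mulVec_mulVec]
    rw [dot_mulVec_left]
    simp only [dotProduct]
    refine Finset.sum_congr rfl fun i _ => ?_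
    rw [Matrix.mulVec_diagonal]; ring
  · have h1 : x ⬝ᵥ x = x ⬝ᵥ ((U * star U) *ᵥ x) := by rw [hUs, Matrix.one_mulVec]
    rw [h1, ← Matrix.mulVec_mulVec, dot_mulVec_left]
    simp only [dotProduct]
    exact Finset.sum_congr rfl fun i _ => (pow_two _).symm

lemma rayleigh_le {M : Matrix m m ℝ} (hM : M.IsHermitian) {t : ℝ}
    (ht : ∀ i, hM.eigenvalues i ≤ t) (x : m → ℝ) :
    x ⬝ᵥ (M *ᵥ x) ≤ t * (x ⬝ᵥ x) := by
  obtain ⟨y, h1, h2⟩ := quad_repr hM x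
  rw [h1, h2, Finset.mul_sum]
  exact Finset.sum_le_sum fun i _ => mul_le_mul_of_nonneg_right (ht i) (sq_nonneg _)

lemma rayleigh_ge {M : Matrix m m ℝ} (hM : M.IsHermitian) {s : ℝ}
    (hs : ∀ i, s ≤ hM.eigenvalues i) (x : m → ℝ) :
    s * (x ⬝ᵥ x) ≤ x ⬝ᵥ (M *ᵥ x) := by
  obtain ⟨y, h1, h2⟩ := quad_repr hM x
  rw [h1, h2, Finset.mul_sum]
  exact Finset.sum_le_sum fun i _ => mul_le_mul_of_nonneg_right (hs i) (sq_nonneg _)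

lemma eigenvalue_mem {M : Matrix m m ℝ} (hM : M.IsHermitian) {t : ℝ} {w : m → ℝ}
    (hw : w ≠ 0) (heq : M *ᵥ w = t • w) : ∃ i, hM.eigenvalues i = t := by
  set U := (hM.eigenvectorUnitary : Matrix m m ℝ) with hU
  have hsU : star U * U = 1 := hM.eigenvectorUnitary.2.1
  have hUs : U * star U = 1 := hM.eigenvectorUnitary.2.2
  set y := star U *ᵥ w with hy
  have hy0 : y ≠ 0 := by
    intro h
    apply hw
    have h2 : U *ᵥ y = 0 := by rw [h, Matrix.mulVec_zero]
    rwa [hy, Matrix.mulVec_mulVec, hUs, Matrix.one_mulVec] at h2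
  have hmat : star U * M = Matrix.diagonal hM.eigenvalues * star U := by
    conv_lhs => rw [spec_decomp hM, ← hU]
    rw [← Matrix.mul_assoc, ← Matrix.mul_assoc, hsU, Matrix.one_mul]
  have hD : Matrix.diagonal hM.eigenvalues *ᵥ y = t • y := by
    have h3 := congrArg (fun v => star U *ᵥ v) heq
    simp only [Matrix.mulVec_mulVec, Matrix.mulVec_smul] at h3
    rw [hmat] at h3
    rw [hy, Matrix.mulVec_mulVec]
    exact h3
  obtain ⟨i, hi⟩ := Function.ne_iff.mp hy0
  refine ⟨i, ?_⟩
  have h4 := congrFun hD i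
  rw [Matrix.mulVec_diagonal] at h4
  simp only [Pi.smul_apply, smul_eq_mul] at h4
  exact mul_right_cancel₀ hi h4

lemma exists_eigvec {M : Matrix m m ℝ} (hM : M.IsHermitian) (i : m) :
    ∃ v : m → ℝ, v ≠ 0 ∧ M *ᵥ v = hM.eigenvalues i • v := by
  refine ⟨⇑(hM.eigenvectorBasis i), ?_, hM.mulVec_eigenvectorBasis i⟩
  intro h
  have h2 := hM.star_eigenvectorUnitary_mulVec i
  rw [h, Matrix.mulVec_zero] at h2
  have h3 := congrFun h2 i
  simp [Pi.single_apply] at h3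

end HoffmanAux

section StrongProdAux

open Matrix ImproperPaper HoffmanAux

variable {n : ℕ} {d : ℕ} (G : SimpleGraph (Fin n)) [DecidableRel G.Adj]

lemma strong_adj_iff (p q : Fin n × Fin (d + 1)) :
    (strongProd G (⊤ : SimpleGraph (Fin (d + 1)))).Adj p q ↔
      (p.1 = q.1 ∧ p.2 ≠ q.2) ∨ G.Adj p.1 q.1 := by
  show (p.1 = q.1 ∧ (⊤ : SimpleGraph (Fin (d + 1))).Adj p.2 q.2) ∨
    (G.Adj p.1 q.1 ∧ p.2 = q.2) ∨
    (G.Adj p.1 q.1 ∧ (⊤ : SimpleGraph (Fin (d + 1))).Adj p.2 q.2) ↔ _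
  simp only [SimpleGraph.top_adj]
  constructor
  · rintro (⟨h1, h2⟩ | ⟨h1, h2⟩ | ⟨h1, h2⟩)
    · exact Or.inl ⟨h1, h2⟩
    · exact Or.inr h1
    · exact Or.inr h1
  · rintro (⟨h1, h2⟩ | h)
    · exact Or.inl ⟨h1, h2⟩
    · by_cases h2 : p.2 = q.2
      · exact Or.inr (Or.inl ⟨h, h2⟩)
      · exact Or.inr (Or.inr ⟨h, h2⟩)

lemma adjMatrix_strong_eq :
    (strongProd G (⊤ : SimpleGraph (Fin (d + 1)))).adjMatrix ℝ =
      Matrix.of (fun p q : Fin n × Fin (d + 1) => (G.adjMatrix ℝ + 1) p.1 q.1) - 1 := by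
  ext p q
  simp only [Matrix.sub_apply, Matrix.of_apply, Matrix.add_apply, Matrix.one_apply,
    SimpleGraph.adjMatrix_apply]
  simp only [strong_adj_iff]
  by_cases h1 : p.1 = q.1 <;> by_cases h2 : p.2 = q.2
  · have hpq : p = q := Prod.ext h1 h2
    simp [h1, h2, hpq]
  · have hpq : p ≠ q := fun h => h2 (congrArg Prod.snd h)
    simp [h1, h2, hpq]
  · have hpq : p ≠ q := fun h => h1 (congrArg Prod.fst h)
    by_cases h3 : G.Adj p.1 q.1 <;> simp [h1, h2, h3, hpq]
  · have hpq : p ≠ q := fun h => h1 (congrArg Prod.fst h)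
    by_cases h3 : G.Adj p.1 q.1 <;> simp [h1, h2, h3, hpq]

lemma mulVec_fst (Aext : Matrix (Fin n) (Fin n) ℝ) (x : Fin n × Fin (d + 1) → ℝ) :
    (Matrix.of (fun p q : Fin n × Fin (d + 1) => Aext p.1 q.1)) *ᵥ x =
      fun p => (Aext *ᵥ (fun u => ∑ i, x (u, i))) p.1 := by
  funext p
  simp only [Matrix.mulVec, dotProduct, Matrix.of_apply]
  rw [Fintype.sum_prod_type]
  exact Finset.sum_congr rfl fun v _ => by rw [Finset.mul_sum]

lemma dot_fst (x : Fin n × Fin (d + 1) → ℝ) (w : Fin n → ℝ) :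
    x ⬝ᵥ (fun p => w p.1) = (fun u => ∑ i, x (u, i)) ⬝ᵥ w := by
  simp only [dotProduct]
  rw [Fintype.sum_prod_type]
  exact Finset.sum_congr rfl fun v _ => by rw [Finset.sum_mul]

lemma quadB (x : Fin n × Fin (d + 1) → ℝ) :
    x ⬝ᵥ ((strongProd G (⊤ : SimpleGraph (Fin (d + 1)))).adjMatrix ℝ *ᵥ x) =
      (fun u => ∑ i, x (u, i)) ⬝ᵥ ((G.adjMatrix ℝ) *ᵥ (fun u => ∑ i, x (u, i))) +
        (fun u => ∑ i, x (u, i)) ⬝ᵥ (fun u => ∑ i, x (u, i)) - x ⬝ᵥ x := by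
  rw [adjMatrix_strong_eq, Matrix.sub_mulVec, Matrix.one_mulVec, dotProduct_sub,
    mulVec_fst, dot_fst, Matrix.add_mulVec, Matrix.one_mulVec, dotProduct_add]

lemma eig_transfer {mu : ℝ} {v : Fin n → ℝ} (hv : (G.adjMatrix ℝ) *ᵥ v = mu • v) :
    ((strongProd G (⊤ : SimpleGraph (Fin (d + 1)))).adjMatrix ℝ) *ᵥ (fun p => v p.1) =
      ((mu + 1) * ((d : ℝ) + 1) - 1) • (fun p => v p.1) := by
  rw [adjMatrix_strong_eq, Matrix.sub_mulVec, Matrix.one_mulVec, mulVec_fst]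
  have hz : (fun u => ∑ i : Fin (d + 1), (fun p : Fin n × Fin (d + 1) => v p.1) (u, i)) =
      ((d : ℝ) + 1) • v := by
    funext u
    simp only [Finset.sum_const, Finset.card_univ, Fintype.card_fin, nsmul_eq_mul,
      Pi.smul_apply, smul_eq_mul]
    push_cast
    ring
  rw [hz]
  have h2 : (G.adjMatrix ℝ + 1) *ᵥ (((d : ℝ) + 1) • v) = ((mu + 1) * ((d : ℝ) + 1)) • v := by
    rw [Matrix.mulVec_smul, Matrix.add_mulVec, Matrix.one_mulVec, hv]
    funext u
    simp only [Pi.smul_apply, Pi.add_apply, smul_eq_mul]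
    ring
  rw [h2]
  funext p
  simp only [Pi.smul_apply, Pi.sub_apply, smul_eq_mul]
  ring

end StrongProdAux

section HoffmanBound

open Matrix ImproperPaper HoffmanAux

lemma improper_lower {m : Type*} [Fintype m] [DecidableEq m] [Nonempty m]
    (Hg : SimpleGraph m) [DecidableRel Hg.Adj] (hB : (Hg.adjMatrix ℝ).IsHermitian)
    {L1 LN : ℝ} (hL1 : IsGreatest (Set.range hB.eigenvalues) L1)
    (hLN : IsLeast (Set.range hB.eigenvalues) LN)
    {d k : ℕ} {c : m → Fin k} (hc : IsImproperColoring Hg d c) :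
    L1 - LN ≤ (k : ℝ) * ((d : ℝ) - LN) := by
  classical
  set B := Hg.adjMatrix ℝ with hBdef
  have hk1 : 1 ≤ k := Nat.one_le_iff_ne_zero.mpr fun h => by
    subst h; exact (c (Classical.arbitrary m)).elim0
  obtain ⟨i0, hi0⟩ := hL1.1
  obtain ⟨x, hx0, hxeig⟩ := exists_eigvec hB i0
  rw [hi0] at hxeig
  set X := x ⬝ᵥ x with hX
  have hXpos : 0 < X := dot_self_pos hx0
  set xi : Fin k → m → ℝ := fun i p => if c p = i then x p else 0 with hxi
  set a : Fin k → ℝ := fun i => xi i ⬝ᵥ xi i with ha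
  have hBt : Bᵀ = B := Hg.transpose_adjMatrix
  have dotB : ∀ u w : m → ℝ, u ⬝ᵥ (B *ᵥ w) = w ⬝ᵥ (B *ᵥ u) := by
    intro u w
    rw [Matrix.dotProduct_mulVec]
    conv_lhs => rw [← hBt]
    rw [Matrix.vecMul_transpose, dotProduct_comm]
  have hxix : ∀ i, xi i ⬝ᵥ x = a i := by
    intro i
    simp only [ha, dotProduct, hxi]
    refine Finset.sum_congr rfl fun p _ => ?_
    by_cases h : c p = i <;> simp [h]
  have hsuma : ∑ i, a i = X := by
    simp only [ha, hxi, dotProduct, hX]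
    rw [Finset.sum_comm]
    refine Finset.sum_congr rfl fun p _ => ?_
    have h1 : ∀ i : Fin k, (if c p = i then x p else 0) * (if c p = i then x p else 0) =
        if c p = i then x p * x p else 0 := by
      intro i; by_cases h : c p = i <;> simp [h]
    rw [Finset.sum_congr rfl fun i _ => h1 i, Finset.sum_ite_eq]
    simp
  have hxiB : ∀ i, xi i ⬝ᵥ (B *ᵥ x) = L1 * a i := by
    intro i
    rw [hxeig, dotProduct_smul, hxix i, smul_eq_mul]
  -- combinatorial bound on each colour class
  have hTbound : ∀ i, xi i ⬝ᵥ (B *ᵥ xi i) ≤ (d : ℝ) * a i := by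
    intro i
    set S : Finset m := Finset.univ.filter (fun p => c p = i) with hSdef
    have hterm : xi i ⬝ᵥ (B *ᵥ xi i) =
        ∑ p, ∑ q, (if c p = i ∧ c q = i then x p * B p q * x q else 0) := by
      simp only [dotProduct, Matrix.mulVec, hxi]
      refine Finset.sum_congr rfl fun p _ => ?_
      by_cases h : c p = i
      · rw [Finset.mul_sum]
        refine Finset.sum_congr rfl fun q _ => ?_
        by_cases h2 : c q = i <;> simp [h, h2] <;> ring
      · simp [h]
    have hsum2 : xi i ⬝ᵥ (B *ᵥ xi i) = ∑ p ∈ S, ∑ q ∈ S, x p * B p q * x q := by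
      rw [hterm, hSdef, Finset.sum_filter]
      refine Finset.sum_congr rfl fun p _ => ?_
      by_cases h : c p = i
      · rw [if_pos h, Finset.sum_filter]
        exact Finset.sum_congr rfl fun q _ => by by_cases h2 : c q = i <;> simp [h, h2]
      · rw [if_neg h]
        simp [h]
    have hBnn : ∀ p q, (0 : ℝ) ≤ B p q := by
      intro p q
      simp only [hBdef, SimpleGraph.adjMatrix_apply]
      by_cases h : Hg.Adj p q <;> simp [h]
    have hBsym : ∀ p q, B p q = B q p := by
      intro p q
      simp only [hBdef, SimpleGraph.adjMatrix_apply, SimpleGraph.adj_comm]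
    have e2 : ∑ p ∈ S, ∑ q ∈ S, B p q * (x q * x q) =
        ∑ p ∈ S, ∑ q ∈ S, B p q * (x p * x p) := by
      rw [Finset.sum_comm]
      exact Finset.sum_congr rfl fun q _ => Finset.sum_congr rfl fun p _ => by rw [hBsym]
    have h2 : 2 * ∑ p ∈ S, ∑ q ∈ S, x p * B p q * x q ≤
        2 * ∑ p ∈ S, ∑ q ∈ S, B p q * (x p * x p) := by
      have e1 : ∀ p q, 2 * (x p * B p q * x q) ≤
          B p q * (x p * x p) + B p q * (x q * x q) := by
        intro p q
        nlinarith [mul_nonneg (hBnn p q) (sq_nonneg (x p - x q))]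
      calc 2 * ∑ p ∈ S, ∑ q ∈ S, x p * B p q * x q
          = ∑ p ∈ S, ∑ q ∈ S, 2 * (x p * B p q * x q) := by
            rw [Finset.mul_sum]
            exact Finset.sum_congr rfl fun p _ => (Finset.mul_sum _ _ _)
        _ ≤ ∑ p ∈ S, ∑ q ∈ S, (B p q * (x p * x p) + B p q * (x q * x q)) :=
            Finset.sum_le_sum fun p _ => Finset.sum_le_sum fun q _ => e1 p q
        _ = ∑ p ∈ S, ∑ q ∈ S, B p q * (x p * x p) +
            ∑ p ∈ S, ∑ q ∈ S, B p q * (x q * x q) := by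
            rw [← Finset.sum_add_distrib]
            exact Finset.sum_congr rfl fun p _ => Finset.sum_add_distrib
        _ = 2 * ∑ p ∈ S, ∑ q ∈ S, B p q * (x p * x p) := by rw [e2]; ring
    have hinner : ∀ p ∈ S, ∑ q ∈ S, B p q ≤ (d : ℝ) := by
      intro p hp
      have hpS : c p = i := (Finset.mem_filter.mp hp).2
      have hcard := hc p
      rw [Set.ncard_eq_toFinset_card'] at hcard
      have hfeq : (S.filter (fun q => Hg.Adj p q)) =
          {w | Hg.Adj p w ∧ c w = c p}.toFinset := by
        ext q
        simp [hSdef, Set.mem_toFinset, hpS, Finset.mem_filter]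
        tauto
      have hsumB : ∑ q ∈ S, B p q = ((S.filter (fun q => Hg.Adj p q)).card : ℝ) := by
        simp only [hBdef, SimpleGraph.adjMatrix_apply]
        rw [Finset.sum_boole]
      rw [hsumB, hfeq]
      exact_mod_cast hcard
    have haS : a i = ∑ p ∈ S, x p * x p := by
      simp only [ha, hxi, dotProduct, hSdef]
      rw [Finset.sum_filter]
      exact Finset.sum_congr rfl fun p _ => by by_cases h : c p = i <;> simp [h]
    have hfin : ∑ p ∈ S, ∑ q ∈ S, B p q * (x p * x p) ≤ (d : ℝ) * a i := by
      rw [haS, Finset.mul_sum]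
      refine Finset.sum_le_sum fun p hp => ?_
      rw [← Finset.sum_mul]
      exact mul_le_mul_of_nonneg_right (hinner p hp) (mul_self_nonneg _)
    rw [hsum2]
    linarith
  have hanneg : ∀ i, 0 ≤ a i := fun i => dot_self_nonneg _
  -- the main per-colour inequality
  have hmain : ∀ i : Fin k,
      LN * (X - 2 * (k : ℝ) * a i + (k : ℝ) ^ 2 * a i) ≤
        L1 * X - 2 * (k : ℝ) * L1 * a i + (k : ℝ) ^ 2 * (xi i ⬝ᵥ (B *ᵥ xi i)) := by
    intro i
    have hz := rayleigh_ge hB (fun j => hLN.2 ⟨j, rfl⟩) (x - (k : ℝ) • xi i)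
    have c1 : x ⬝ᵥ (B *ᵥ x) = L1 * X := by
      rw [hxeig, dotProduct_smul, smul_eq_mul, hX]
    have c2 : xi i ⬝ᵥ (B *ᵥ x) = L1 * a i := hxiB i
    have c3 : x ⬝ᵥ (B *ᵥ xi i) = L1 * a i := by rw [dotB]; exact hxiB i
    have c4 : x ⬝ᵥ xi i = a i := by rw [dotProduct_comm]; exact hxix i
    have haii : xi i ⬝ᵥ xi i = a i := rfl
    have hXX : x ⬝ᵥ x = X := rfl
    have e1 : (x - (k : ℝ) • xi i) ⬝ᵥ (B *ᵥ (x - (k : ℝ) • xi i)) =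
        L1 * X - 2 * (k : ℝ) * L1 * a i + (k : ℝ) ^ 2 * (xi i ⬝ᵥ (B *ᵥ xi i)) := by
      simp only [Matrix.mulVec_sub, Matrix.mulVec_smul, sub_dotProduct,
        dotProduct_sub, smul_dotProduct, dotProduct_smul,
        smul_eq_mul, c1, c2, c3]
      ring
    have e2 : (x - (k : ℝ) • xi i) ⬝ᵥ (x - (k : ℝ) • xi i) =
        X - 2 * (k : ℝ) * a i + (k : ℝ) ^ 2 * a i := by
      simp only [sub_dotProduct, dotProduct_sub, smul_dotProduct,
        dotProduct_smul, smul_eq_mul, hxix, c4, haii, hXX]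
      ring
    rw [e1] at hz
    rw [e2] at hz
    exact hz
  -- sum the inequalities over all colours
  have hsumL : ∑ i : Fin k, (LN * (X - 2 * (k : ℝ) * a i + (k : ℝ) ^ 2 * a i)) =
      LN * ((k : ℝ) * X - 2 * (k : ℝ) * X + (k : ℝ) ^ 2 * X) := by
    rw [← Finset.mul_sum]
    congr 1
    rw [Finset.sum_add_distrib, Finset.sum_sub_distrib, ← Finset.mul_sum, ← Finset.mul_sum]
    rw [hsuma, Finset.sum_const, Finset.card_univ, Fintype.card_fin, nsmul_eq_mul]
    try ring
  have hsumR : ∑ i : Fin k, (L1 * X - 2 * (k : ℝ) * L1 * a i +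
      (k : ℝ) ^ 2 * (xi i ⬝ᵥ (B *ᵥ xi i))) =
      (k : ℝ) * (L1 * X) - 2 * (k : ℝ) * L1 * X +
        (k : ℝ) ^ 2 * (∑ i, xi i ⬝ᵥ (B *ᵥ xi i)) := by
    rw [Finset.sum_add_distrib, Finset.sum_sub_distrib, ← Finset.mul_sum, ← Finset.mul_sum]
    rw [hsuma, Finset.sum_const, Finset.card_univ, Fintype.card_fin, nsmul_eq_mul,
      ← Finset.mul_sum]
    try ring
  have hT : ∑ i, xi i ⬝ᵥ (B *ᵥ xi i) ≤ (d : ℝ) * X := by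
    calc ∑ i, xi i ⬝ᵥ (B *ᵥ xi i) ≤ ∑ i, (d : ℝ) * a i :=
          Finset.sum_le_sum fun i _ => hTbound i
      _ = (d : ℝ) * X := by rw [← Finset.mul_sum, hsuma]
  have hL := Finset.sum_le_sum fun i (_ : i ∈ Finset.univ) => hmain i
  rw [hsumL, hsumR] at hL
  have hkR : (1 : ℝ) ≤ (k : ℝ) := by exact_mod_cast hk1
  have hkX : 0 < (k : ℝ) * X := by positivity
  have hT2 : (k : ℝ) ^ 2 * (∑ i, xi i ⬝ᵥ (B *ᵥ xi i)) ≤ (k : ℝ) ^ 2 * ((d : ℝ) * X) :=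
    mul_le_mul_of_nonneg_left hT (sq_nonneg _)
  have hfinal : 0 ≤ (k : ℝ) * X * ((k : ℝ) * (d : ℝ) - (k : ℝ) * LN - L1 + LN) := by
    nlinarith [hL, hT2]
  have hpos : 0 ≤ (k : ℝ) * (d : ℝ) - (k : ℝ) * LN - L1 + LN := by
    by_contra hneg
    push_neg at hneg
    nlinarith [hfinal, hkX]
  nlinarith [hpos]

end HoffmanBound

open ImproperPaper in

theorem stmt_10 {n : ℕ} (hn : 1 ≤ n) (G : SimpleGraph (Fin n)) [DecidableRel G.Adj]
    (hedge : ∃ u v : Fin n, G.Adj u v) (d : ℕ)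
    (hA : (G.adjMatrix ℝ).IsHermitian) (lam1 lamn : ℝ)
    (hlam1 : IsGreatest (Set.range hA.eigenvalues) lam1)
    (hlamn : IsLeast (Set.range hA.eigenvalues) lamn)
    (hHoffman : (chromNum G : ℝ) = 1 - lam1 / lamn)
    (hB : (((strongProd G (⊤ : SimpleGraph (Fin (d + 1)))).adjMatrix ℝ)).IsHermitian)
    (Lam1 LamN : ℝ)
    (hLam1 : IsGreatest (Set.range hB.eigenvalues) Lam1)
    (hLamN : IsLeast (Set.range hB.eigenvalues) LamN) :
    (improperChromaticNumber (strongProd G (⊤ : SimpleGraph (Fin (d + 1)))) d : ℝ) =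
        (Lam1 - LamN) / ((d : ℝ) - LamN) ∧
      improperChromaticNumber (strongProd G (⊤ : SimpleGraph (Fin (d + 1)))) d =
        chromNum G := by
  classical
  haveI : Nonempty (Fin n) := ⟨⟨0, hn⟩⟩
  haveI : Nonempty (Fin n × Fin (d + 1)) := ⟨(⟨0, hn⟩, 0)⟩
  obtain ⟨u, v, huv⟩ := hedge
  have hne : u ≠ v := G.ne_of_adj huv
  have hA1 : ∀ i, hA.eigenvalues i ≤ lam1 := fun i => hlam1.2 ⟨i, rfl⟩
  have hAn : ∀ i, lamn ≤ hA.eigenvalues i := fun i => hlamn.2 ⟨i, rfl⟩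
  have hAuv : G.adjMatrix ℝ u v = 1 := by simp [huv]
  have hAvu : G.adjMatrix ℝ v u = 1 := by simp [huv.symm]
  have hAuu : G.adjMatrix ℝ u u = 0 := by simp
  have hAvv : G.adjMatrix ℝ v v = 0 := by simp
  have single_quad : ∀ (M : Matrix (Fin n) (Fin n) ℝ) (i j : Fin n),
      Pi.single i (1 : ℝ) ⬝ᵥ (M *ᵥ Pi.single j 1) = M i j := by
    intro M i j
    rw [single_dotProduct, Matrix.mulVec_single]
    simp
  have single_dot : ∀ i j : Fin n,
      Pi.single i (1 : ℝ) ⬝ᵥ Pi.single j (1 : ℝ) = if i = j then 1 else 0 := by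
    intro i j
    rw [single_dotProduct]
    simp [Pi.single_apply, eq_comm]
  have hlam1ge : 1 ≤ lam1 := by
    have h2 := HoffmanAux.rayleigh_le hA hA1 (Pi.single u (1:ℝ) + Pi.single v (1:ℝ))
    have hd1 : (Pi.single u (1:ℝ) + Pi.single v (1:ℝ)) ⬝ᵥ
        ((G.adjMatrix ℝ) *ᵥ (Pi.single u (1:ℝ) + Pi.single v (1:ℝ))) = 2 := by
      simp only [Matrix.mulVec_add, dotProduct_add, add_dotProduct,
        single_quad]
      rw [hAuu, hAuv, hAvu, hAvv]; norm_num
    have hd2 : (Pi.single u (1:ℝ) + Pi.single v (1:ℝ)) ⬝ᵥ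
        (Pi.single u (1:ℝ) + Pi.single v (1:ℝ)) = (2:ℝ) := by
      simp only [dotProduct_add, add_dotProduct, single_dot]
      simp [hne, hne.symm]
      try norm_num
    rw [hd1, hd2] at h2
    linarith
  have hlamnle : lamn ≤ -1 := by
    have h2 := HoffmanAux.rayleigh_ge hA hAn (Pi.single u (1:ℝ) - Pi.single v (1:ℝ))
    have hd1 : (Pi.single u (1:ℝ) - Pi.single v (1:ℝ)) ⬝ᵥ
        ((G.adjMatrix ℝ) *ᵥ (Pi.single u (1:ℝ) - Pi.single v (1:ℝ))) = -2 := by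
      simp only [Matrix.mulVec_sub, dotProduct_sub, sub_dotProduct,
        single_quad]
      rw [hAuu, hAuv, hAvu, hAvv]; norm_num
    have hd2 : (Pi.single u (1:ℝ) - Pi.single v (1:ℝ)) ⬝ᵥ
        (Pi.single u (1:ℝ) - Pi.single v (1:ℝ)) = (2:ℝ) := by
      simp only [dotProduct_sub, sub_dotProduct, single_dot]
      simp [hne, hne.symm]
      try norm_num
    rw [hd1, hd2] at h2
    linarith
  -- bounds on eigenvalues of B
  have hBle : ∀ j, hB.eigenvalues j ≤ (lam1 + 1) * ((d : ℝ) + 1) - 1 := by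
    intro j
    obtain ⟨w, hw0, hweig⟩ := HoffmanAux.exists_eigvec hB j
    have hq := quadB G w
    have hwX : 0 < w ⬝ᵥ w := HoffmanAux.dot_self_pos hw0
    have hzz : (fun u0 => ∑ i, w (u0, i)) ⬝ᵥ (fun u0 => ∑ i, w (u0, i)) ≤
        ((d : ℝ) + 1) * (w ⬝ᵥ w) := by
      have hww : w ⬝ᵥ w = ∑ u0, ∑ i, w (u0, i) ^ 2 := by
        simp only [dotProduct]
        rw [Fintype.sum_prod_type]
        exact Finset.sum_congr rfl fun u0 _ =>
          Finset.sum_congr rfl fun i _ => (pow_two _).symm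
      have hzz1 : (fun u0 => ∑ i, w (u0, i)) ⬝ᵥ (fun u0 => ∑ i, w (u0, i)) =
          ∑ u0, (∑ i, w (u0, i)) ^ 2 := by
        simp only [dotProduct]
        exact Finset.sum_congr rfl fun u0 _ => (pow_two _).symm
      rw [hzz1, hww, Finset.mul_sum]
      refine Finset.sum_le_sum fun u0 _ => ?_
      have h3 := sq_sum_le_card_mul_sum_sq (s := (Finset.univ : Finset (Fin (d+1))))
        (f := fun i : Fin (d + 1) => w (u0, i))
      simpa [Finset.card_univ, Fintype.card_fin, Nat.cast_add, Nat.cast_one] using h3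
    have heig : hB.eigenvalues j * (w ⬝ᵥ w) =
        w ⬝ᵥ ((strongProd G (⊤ : SimpleGraph (Fin (d + 1)))).adjMatrix ℝ *ᵥ w) := by
      rw [hweig, dotProduct_smul, smul_eq_mul]
    have hz1 := HoffmanAux.rayleigh_le hA hA1 (fun u0 => ∑ i, w (u0, i))
    have hznn := HoffmanAux.dot_self_nonneg (fun u0 : Fin n => ∑ i, w (u0, i))
    have hmul : (lam1 + 1) * ((fun u0 => ∑ i, w (u0, i)) ⬝ᵥ (fun u0 => ∑ i, w (u0, i))) ≤
        (lam1 + 1) * (((d : ℝ) + 1) * (w ⬝ᵥ w)) :=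
      mul_le_mul_of_nonneg_left hzz (by linarith)
    have h5 : hB.eigenvalues j * (w ⬝ᵥ w) ≤ ((lam1 + 1) * ((d : ℝ) + 1) - 1) * (w ⬝ᵥ w) := by
      rw [heig, hq]
      nlinarith [hz1, hmul]
    exact le_of_mul_le_mul_right h5 hwX
  have hBge : ∀ j, (lamn + 1) * ((d : ℝ) + 1) - 1 ≤ hB.eigenvalues j := by
    intro j
    obtain ⟨w, hw0, hweig⟩ := HoffmanAux.exists_eigvec hB j
    have hq := quadB G w
    have hwX : 0 < w ⬝ᵥ w := HoffmanAux.dot_self_pos hw0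
    have hzz : (fun u0 => ∑ i, w (u0, i)) ⬝ᵥ (fun u0 => ∑ i, w (u0, i)) ≤
        ((d : ℝ) + 1) * (w ⬝ᵥ w) := by
      have hww : w ⬝ᵥ w = ∑ u0, ∑ i, w (u0, i) ^ 2 := by
        simp only [dotProduct]
        rw [Fintype.sum_prod_type]
        exact Finset.sum_congr rfl fun u0 _ =>
          Finset.sum_congr rfl fun i _ => (pow_two _).symm
      have hzz1 : (fun u0 => ∑ i, w (u0, i)) ⬝ᵥ (fun u0 => ∑ i, w (u0, i)) =
          ∑ u0, (∑ i, w (u0, i)) ^ 2 := by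
        simp only [dotProduct]
        exact Finset.sum_congr rfl fun u0 _ => (pow_two _).symm
      rw [hzz1, hww, Finset.mul_sum]
      refine Finset.sum_le_sum fun u0 _ => ?_
      have h3 := sq_sum_le_card_mul_sum_sq (s := (Finset.univ : Finset (Fin (d+1))))
        (f := fun i : Fin (d + 1) => w (u0, i))
      simpa [Finset.card_univ, Fintype.card_fin, Nat.cast_add, Nat.cast_one] using h3
    have heig : hB.eigenvalues j * (w ⬝ᵥ w) =
        w ⬝ᵥ ((strongProd G (⊤ : SimpleGraph (Fin (d + 1)))).adjMatrix ℝ *ᵥ w) := by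
      rw [hweig, dotProduct_smul, smul_eq_mul]
    have hz1 := HoffmanAux.rayleigh_ge hA hAn (fun u0 => ∑ i, w (u0, i))
    have hmul : (lamn + 1) * (((d : ℝ) + 1) * (w ⬝ᵥ w)) ≤
        (lamn + 1) * ((fun u0 => ∑ i, w (u0, i)) ⬝ᵥ (fun u0 => ∑ i, w (u0, i))) :=
      mul_le_mul_of_nonpos_left hzz (by linarith)
    have h5 : ((lamn + 1) * ((d : ℝ) + 1) - 1) * (w ⬝ᵥ w) ≤ hB.eigenvalues j * (w ⬝ᵥ w) := by
      rw [heig, hq]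
      nlinarith [hz1, hmul]
    exact le_of_mul_le_mul_right h5 hwX
  -- identification of Lam1 and LamN
  have hLam1eq : Lam1 = (lam1 + 1) * ((d : ℝ) + 1) - 1 := by
    obtain ⟨i1, hi1⟩ := hlam1.1
    obtain ⟨v1, hv10, hv1eig⟩ := HoffmanAux.exists_eigvec hA i1
    rw [hi1] at hv1eig
    have htrans := eig_transfer (d := d) G hv1eig
    have hw0 : (fun p : Fin n × Fin (d + 1) => v1 p.1) ≠ 0 := by
      obtain ⟨u0, hu0⟩ := Function.ne_iff.mp hv10
      exact Function.ne_iff.mpr ⟨(u0, 0), hu0⟩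
    obtain ⟨j1, hj1⟩ := HoffmanAux.eigenvalue_mem hB hw0 htrans
    obtain ⟨jM, hjM⟩ := hLam1.1
    exact le_antisymm (by rw [← hjM]; exact hBle jM) (hLam1.2 ⟨j1, hj1⟩)
  have hLamNeq : LamN = (lamn + 1) * ((d : ℝ) + 1) - 1 := by
    obtain ⟨i1, hi1⟩ := hlamn.1
    obtain ⟨v1, hv10, hv1eig⟩ := HoffmanAux.exists_eigvec hA i1
    rw [hi1] at hv1eig
    have htrans := eig_transfer (d := d) G hv1eig
    have hw0 : (fun p : Fin n × Fin (d + 1) => v1 p.1) ≠ 0 := by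
      obtain ⟨u0, hu0⟩ := Function.ne_iff.mp hv10
      exact Function.ne_iff.mpr ⟨(u0, 0), hu0⟩
    obtain ⟨j1, hj1⟩ := HoffmanAux.eigenvalue_mem hB hw0 htrans
    obtain ⟨jM, hjM⟩ := hLamN.1
    exact le_antisymm (hLamN.2 ⟨j1, hj1⟩) (by rw [← hjM]; exact hBge jM)
  have hdnn : (0 : ℝ) ≤ (d : ℝ) := Nat.cast_nonneg d
  have hdpos : 0 < (d : ℝ) - LamN := by
    rw [hLamNeq]
    nlinarith [mul_nonneg (by linarith : (0:ℝ) ≤ -lamn - 1) (by linarith : (0:ℝ) ≤ (d:ℝ) + 1)]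
  have hlamn_ne : lamn ≠ 0 := by intro h; rw [h] at hlamnle; linarith
  have hvalue : (Lam1 - LamN) / ((d : ℝ) - LamN) = 1 - lam1 / lamn := by
    have hden : (d : ℝ) - LamN ≠ 0 := ne_of_gt hdpos
    rw [div_eq_iff hden, hLam1eq, hLamNeq]
    field_simp
    ring
  -- the proper colouring of G with chromNum G colours
  have h0 : chromNum G ∈ {t | ∃ c : Fin n → Fin t, ∀ u0 v0, G.Adj u0 v0 → c u0 ≠ c v0} :=
    Nat.sInf_mem ⟨n, (id : Fin n → Fin n), fun u0 v0 h => G.ne_of_adj h⟩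
  obtain ⟨cG, hcG⟩ := h0
  -- the improper colouring with the improper chromatic number of colours
  have hkMem : improperChromaticNumber (strongProd G (⊤ : SimpleGraph (Fin (d + 1)))) d ∈
      {t | ∃ c : Fin n × Fin (d + 1) → Fin t,
        IsImproperColoring (strongProd G (⊤ : SimpleGraph (Fin (d + 1)))) d c} := by
    apply Nat.sInf_mem
    refine ⟨Fintype.card (Fin n × Fin (d + 1)), Fintype.equivFin _, ?_⟩
    intro p
    have hempty : {w | (strongProd G (⊤ : SimpleGraph (Fin (d + 1)))).Adj p w ∧
        (Fintype.equivFin (Fin n × Fin (d + 1))) w = (Fintype.equivFin _) p} = ∅ := by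
      ext w
      simp only [Set.mem_setOf_eq, Set.mem_empty_iff_false, iff_false, not_and]
      intro hadj heq
      have hwp : w = p := (Fintype.equivFin _).injective heq
      rw [hwp] at hadj
      exact (strongProd G (⊤ : SimpleGraph (Fin (d + 1)))).irrefl hadj
    rw [hempty, Set.ncard_empty]
    exact Nat.zero_le d
  obtain ⟨cK, hcK⟩ := hkMem
  -- upper bound
  have hupper : improperChromaticNumber (strongProd G (⊤ : SimpleGraph (Fin (d + 1)))) d ≤
      chromNum G := by
    apply Nat.sInf_le
    refine ⟨fun p => cG p.1, ?_⟩
    intro p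
    show {w | (strongProd G (⊤ : SimpleGraph (Fin (d + 1)))).Adj p w ∧
      cG w.1 = cG p.1}.ncard ≤ d
    have hsub : {w | (strongProd G (⊤ : SimpleGraph (Fin (d + 1)))).Adj p w ∧
        cG w.1 = cG p.1} ⊆ {w : Fin n × Fin (d + 1) | w.1 = p.1 ∧ w.2 ≠ p.2} := by
      rintro w ⟨hadj, heq⟩
      rw [strong_adj_iff] at hadj
      rcases hadj with ⟨h1, h2⟩ | h
      · exact ⟨h1.symm, fun hh => h2 hh.symm⟩
      · exact absurd heq.symm (hcG p.1 w.1 h)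
    have hcardT : {w : Fin n × Fin (d + 1) | w.1 = p.1 ∧ w.2 ≠ p.2}.ncard = d := by
      have himg : {w : Fin n × Fin (d + 1) | w.1 = p.1 ∧ w.2 ≠ p.2} =
          (fun j => (p.1, j)) '' {j : Fin (d + 1) | j ≠ p.2} := by
        ext w
        constructor
        · rintro ⟨h1, h2⟩
          exact ⟨w.2, h2, by rw [← h1]⟩
        · rintro ⟨j, hj, rfl⟩
          exact ⟨rfl, hj⟩
      have hinj : Function.Injective (fun j : Fin (d + 1) => (p.1, j)) := by
        intro a b hab
        exact congrArg Prod.snd hab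
      rw [himg, Set.ncard_image_of_injective _ hinj, Set.ncard_eq_toFinset_card']
      simp only [Set.toFinset_setOf]
      rw [Finset.filter_ne', Finset.card_erase_of_mem (Finset.mem_univ _), Finset.card_univ,
        Fintype.card_fin]
      omega
    calc {w | (strongProd G (⊤ : SimpleGraph (Fin (d + 1)))).Adj p w ∧
        cG w.1 = cG p.1}.ncard
        ≤ {w : Fin n × Fin (d + 1) | w.1 = p.1 ∧ w.2 ≠ p.2}.ncard :=
          Set.ncard_le_ncard hsub (Set.toFinite _)
      _ = d := hcardT
  -- lower bound via the improper Hoffman bound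
  have hlow := improper_lower (strongProd G (⊤ : SimpleGraph (Fin (d + 1)))) hB hLam1 hLamN hcK
  have hchromle : (chromNum G : ℝ) ≤
      (improperChromaticNumber (strongProd G (⊤ : SimpleGraph (Fin (d + 1)))) d : ℝ) := by
    rw [hHoffman, ← hvalue, div_le_iff₀ hdpos]
    exact hlow
  have hlower : chromNum G ≤
      improperChromaticNumber (strongProd G (⊤ : SimpleGraph (Fin (d + 1)))) d := by
    exact_mod_cast hchromle
  have hkeq : improperChromaticNumber (strongProd G (⊤ : SimpleGraph (Fin (d + 1)))) d =
      chromNum G := le_antisymm hupper hlower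
  refine ⟨?_, hkeq⟩
  rw [hkeq, hHoffman, ← hvalue]
end

section
/- Let G be a finite simple graph whose chromatic number equals its clique number, χ(G) = ω(G). Then for every integer d ≥ 0, χ^d(G ⊠ K_{d+1}) = χ(G). In particular this holds for all perfect graphs G. -/
open SimpleGraph Finset Matrix

open ImproperPaper in

theorem stmt_18 {V : Type*} [Fintype V] (G : SimpleGraph V) (d : ℕ)
    (hperf : chromNum G = G.cliqueNum) :
    improperChromaticNumber (strongProd G (⊤ : SimpleGraph (Fin (d + 1)))) d =
      chromNum G := by
  classical
  -- a proper colouring with `chromNum G` colours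
  have hne : {n | ∃ c : V → Fin n, ∀ u v, G.Adj u v → c u ≠ c v}.Nonempty := by
    refine ⟨Fintype.card V, fun v => (Fintype.equivFin V) v, fun u v huv h => ?_⟩
    exact G.ne_of_adj huv ((Fintype.equivFin V).injective h)
  obtain ⟨c, hc⟩ : ∃ c : V → Fin (chromNum G), ∀ u v, G.Adj u v → c u ≠ c v :=
    Nat.sInf_mem hne
  set GG := strongProd G (⊤ : SimpleGraph (Fin (d + 1))) with hGG
  -- the lifted colouring is d-improper
  have himp : IsImproperColoring GG d (fun p => c p.1) := by
    intro p
    have hsub : ({w | GG.Adj p w ∧ c w.1 = c p.1} : Set (V × Fin (d + 1))) ⊆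
        ↑(({p.1} : Finset V) ×ˢ (Finset.univ.erase p.2)) := by
      rintro ⟨u, i⟩ ⟨hadj, hcol⟩
      rcases hadj with ⟨h1, h2⟩ | ⟨h1, h2⟩ | ⟨h1, h2⟩
      · simp only [Finset.mem_coe, Finset.mem_product, Finset.mem_singleton,
          Finset.mem_erase, Finset.mem_univ, and_true]
        exact ⟨h1.symm, Ne.symm ((top_adj _ _).1 h2)⟩
      · exact absurd hcol (hc _ _ h1.symm)
      · exact absurd hcol (hc _ _ h1.symm)
    calc ({w | GG.Adj p w ∧ c w.1 = c p.1} : Set (V × Fin (d + 1))).ncard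
        ≤ (↑(({p.1} : Finset V) ×ˢ (Finset.univ.erase p.2)) : Set (V × Fin (d+1))).ncard :=
          Set.ncard_le_ncard hsub (Set.toFinite _)
      _ = (({p.1} : Finset V) ×ˢ (Finset.univ.erase p.2)).card := Set.ncard_coe_finset _
      _ ≤ d := by
          rw [Finset.card_product, Finset.card_singleton, one_mul]
          simp
  have hle : improperChromaticNumber GG d ≤ chromNum G :=
    Nat.sInf_le ⟨fun p => c p.1, himp⟩
  refine le_antisymm hle ?_
  -- lower bound
  obtain ⟨c', hc'⟩ : ∃ c' : V × Fin (d + 1) → Fin (improperChromaticNumber GG d),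
      IsImproperColoring GG d c' :=
    Nat.sInf_mem (s := {n | ∃ c'' : V × Fin (d + 1) → Fin n, IsImproperColoring GG d c''})
      ⟨chromNum G, fun p => c p.1, himp⟩
  obtain ⟨s, hs⟩ := G.exists_isNClique_cliqueNum
  set T : Finset (V × Fin (d + 1)) := s ×ˢ Finset.univ with hT
  -- clique property of T in GG
  have hclique : ∀ p ∈ T, ∀ q ∈ T, p ≠ q → GG.Adj p q := by
    rintro ⟨u, i⟩ hp ⟨v, j⟩ hq hne2
    simp only [hT, Finset.mem_product] at hp hq
    by_cases huv : u = v
    · subst huv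
      have hij : i ≠ j := fun h => hne2 (by simp [h])
      exact Or.inl ⟨rfl, by simpa using hij⟩
    · have hadj := hs.1 hp.1 hq.1 huv
      by_cases hij : i = j
      · exact Or.inr (Or.inl ⟨hadj, hij⟩)
      · exact Or.inr (Or.inr ⟨hadj, by simpa using hij⟩)
  -- each colour fiber within T has at most d+1 elements
  have hfiber : ∀ a ∈ T.image c', (T.filter (fun p => c' p = a)).card ≤ d + 1 := by
    intro a _
    by_contra hlt
    push_neg at hlt
    obtain ⟨p, hp⟩ : (T.filter (fun p => c' p = a)).Nonempty :=
      Finset.card_pos.1 (by omega)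
    have hpT := (Finset.mem_filter.1 hp).1
    have hpa := (Finset.mem_filter.1 hp).2
    have hsub : (↑((T.filter (fun q => c' q = a)).erase p) : Set (V × Fin (d + 1))) ⊆
        {w | GG.Adj p w ∧ c' w = c' p} := by
      intro q hq
      simp only [Finset.coe_erase, Set.mem_diff, Finset.mem_coe, Set.mem_singleton_iff] at hq
      obtain ⟨hqf, hqp⟩ := hq
      have hqT := (Finset.mem_filter.1 hqf).1
      have hqa := (Finset.mem_filter.1 hqf).2
      exact ⟨hclique p hpT q hqT (fun h => hqp h.symm), by rw [hqa, hpa]⟩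
    have h1 : d + 1 ≤ ((T.filter (fun q => c' q = a)).erase p).card := by
      rw [Finset.card_erase_of_mem hp]; omega
    have h2 : (↑((T.filter (fun q => c' q = a)).erase p) : Set (V × Fin (d + 1))).ncard ≤
        ({w | GG.Adj p w ∧ c' w = c' p} : Set (V × Fin (d + 1))).ncard :=
      Set.ncard_le_ncard hsub (Set.toFinite _)
    rw [Set.ncard_coe_finset] at h2
    have := hc' p
    omega
  have hcount : T.card ≤ (d + 1) * (T.image c').card :=
    Finset.card_le_mul_card_image_of_maps_to (fun p hp => Finset.mem_image_of_mem _ hp)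
      _ hfiber
  have hTcard : T.card = G.cliqueNum * (d + 1) := by
    rw [hT, Finset.card_product, Finset.card_univ, Fintype.card_fin, hs.2]
  have himg : (T.image c').card ≤ improperChromaticNumber GG d := by
    simpa using Finset.card_le_card (Finset.subset_univ (T.image c'))
  rw [hperf]
  nlinarith [hcount, hTcard, himg]
end

section
/- For every finite simple graph G and all positive integers t and ℓ, the ℓ-clustered chromatic number of G equals the ℓt-clustered chromatic number of the strong product of G with K_t: χ^{\underline{ℓ}}(G) = χ^{\underline{ℓt}}(G ⊠ K_t). In particular, taking ℓ = 1, χ(G) = χ^{\underline{t}}(G ⊠ K_t) for every positive integer t. -/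
open SimpleGraph Finset Matrix

namespace Stmt19Aux

open ImproperPaper Relation

variable {W : Type*} {α : Type*}

lemma class_eq {H : SimpleGraph W} {c : W → α} {p q : W}
    (h : Relation.ReflTransGen (fun a b => H.Adj a b ∧ c a = c b) p q) :
    {r | Relation.ReflTransGen (fun a b => H.Adj a b ∧ c a = c b) p r}
      = {r | Relation.ReflTransGen (fun a b => H.Adj a b ∧ c a = c b) q r} := by
  have hsymm : Symmetric (fun a b => H.Adj a b ∧ c a = c b) :=
    fun a b hab => ⟨hab.1.symm, hab.2.symm⟩
  have h' := (@Relation.ReflTransGen.stdSymm _ _ ⟨hsymm⟩).symm _ _ h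
  ext r
  exact ⟨fun hr => h'.trans hr, fun hr => h.trans hr⟩

lemma hard {V : Type*} [Fintype V] {G : SimpleGraph V} {t l n : ℕ} (ht : 0 < t)
    {c' : V × Fin t → Fin n}
    (hc' : IsClusteredColoring (strongProd G (⊤ : SimpleGraph (Fin t))) (l * t) c') :
    ∃ c : V → Fin n, IsClusteredColoring G l c := by
  classical
  set H := strongProd G (⊤ : SimpleGraph (Fin t)) with hH
  let K : V × Fin t → Finset (V × Fin t) := fun p =>
    (Set.toFinite {q | Relation.ReflTransGen
      (fun a b => H.Adj a b ∧ c' a = c' b) p q}).toFinset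
  have hKcard : ∀ p, (K p).card ≤ l * t := by
    intro p
    have := hc' p
    rwa [Set.ncard_eq_toFinset_card _ (Set.toFinite _)] at this
  have hKmem : ∀ p, p ∈ K p := by
    intro p
    simp only [K, Set.Finite.mem_toFinset, Set.mem_setOf_eq]
    exact Relation.ReflTransGen.refl
  have hKeq : ∀ {p q}, H.Adj p q → c' p = c' q → K p = K q := by
    intro p q hadj hcol
    have hset := class_eq (H := H) (c := c')
      (Relation.ReflTransGen.single ⟨hadj, hcol⟩)
    apply Finset.coe_injective
    simpa only [K, Set.Finite.coe_toFinset] using hset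
  -- Hall's condition
  let r : V → Finset (Finset (V × Fin t) × Fin l) :=
    fun v => ((Finset.univ.image fun i : Fin t => K (v, i)) ×ˢ Finset.univ)
  have hall : ∀ s : Finset V, s.card ≤ (s.biUnion r).card := by
    intro s
    set comps := s.biUnion (fun v => Finset.univ.image fun i : Fin t => K (v, i))
      with hcomps
    have hbi : s.biUnion r = comps ×ˢ (Finset.univ : Finset (Fin l)) := by
      ext x
      simp only [r, comps, Finset.mem_biUnion, Finset.mem_product, Finset.mem_univ,
        and_true]
    have hsub : s ×ˢ (Finset.univ : Finset (Fin t)) ⊆ comps.biUnion id := by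
      intro p hp
      rw [Finset.mem_product] at hp
      refine Finset.mem_biUnion.2 ⟨K p, ?_, hKmem p⟩
      exact Finset.mem_biUnion.2 ⟨p.1, hp.1, Finset.mem_image.2 ⟨p.2, Finset.mem_univ _, rfl⟩⟩
    have hcount : s.card * t ≤ comps.card * l * t := by
      calc s.card * t = (s ×ˢ (Finset.univ : Finset (Fin t))).card := by
            simp [Finset.card_product]
        _ ≤ (comps.biUnion id).card := Finset.card_le_card hsub
        _ ≤ ∑ F ∈ comps, F.card := Finset.card_biUnion_le
        _ ≤ ∑ _F ∈ comps, (l * t) := Finset.sum_le_sum (by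
              intro F hF
              simp only [comps, Finset.mem_biUnion, Finset.mem_image] at hF
              obtain ⟨v, _, i, _, rfl⟩ := hF
              exact hKcard _)
        _ = comps.card * (l * t) := by simp [Finset.sum_const, Nat.smul_one_eq_cast]
        _ = comps.card * l * t := by ring
    rw [hbi, Finset.card_product, Finset.card_univ, Fintype.card_fin]
    exact Nat.le_of_mul_le_mul_right hcount ht
  obtain ⟨f, hfinj, hfmem⟩ := (Finset.all_card_le_biUnion_card_iff_exists_injective r).1 hall
  have hchoice : ∀ v : V, ∃ i : Fin t, K (v, i) = (f v).1 := by
    intro v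
    have := hfmem v
    simp only [r, Finset.mem_product] at this
    obtain ⟨h1, -⟩ := this
    rw [Finset.mem_image] at h1
    obtain ⟨i, -, hi⟩ := h1
    exact ⟨i, hi⟩
  choose idx hidx using hchoice
  refine ⟨fun v => c' (v, idx v), ?_⟩
  intro v
  have hstep : ∀ {u w : V}, G.Adj u w → c' (u, idx u) = c' (w, idx w) →
      (f u).1 = (f w).1 := by
    intro u w hadj hcol
    rw [← hidx u, ← hidx w]
    refine hKeq ?_ hcol
    by_cases hi : idx u = idx w
    · exact Or.inr (Or.inl ⟨hadj, hi⟩)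
    · exact Or.inr (Or.inr ⟨hadj, by simpa using hi⟩)
  have hconst : ∀ w, Relation.ReflTransGen
      (fun a b => G.Adj a b ∧ c' (a, idx a) = c' (b, idx b)) v w →
      (f w).1 = (f v).1 := by
    intro w hw
    induction hw with
    | refl => rfl
    | tail _ h2 ih => rw [← hstep h2.1 h2.2]; exact ih
  have hinj : Set.InjOn (fun w => (f w).2)
      {w | Relation.ReflTransGen
        (fun a b => G.Adj a b ∧ c' (a, idx a) = c' (b, idx b)) v w} := by
    intro a ha b hb hab
    apply hfinj
    exact Prod.ext (by rw [hconst a ha, hconst b hb]) hab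
  calc ({w | Relation.ReflTransGen
        (fun a b => G.Adj a b ∧ c' (a, idx a) = c' (b, idx b)) v w} : Set V).ncard
      = ((fun w => (f w).2) '' _).ncard := (Set.ncard_image_of_injOn hinj).symm
    _ ≤ (Set.univ : Set (Fin l)).ncard :=
        Set.ncard_le_ncard (Set.subset_univ _) (Set.toFinite _)
    _ = l := by rw [Set.ncard_univ, Nat.card_eq_fintype_card, Fintype.card_fin]

lemma colour_const {H : SimpleGraph W} {c : W → α} {p q : W}
    (h : Relation.ReflTransGen (fun a b => H.Adj a b ∧ c a = c b) p q) : c p = c q := by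
  induction h with
  | refl => rfl
  | tail _ h2 ih => exact ih.trans h2.2

lemma easy {V : Type*} [Fintype V] {G : SimpleGraph V} {t l n : ℕ}
    {c : V → Fin n} (hc : IsClusteredColoring G l c) :
    IsClusteredColoring (strongProd G (⊤ : SimpleGraph (Fin t))) (l * t)
      (fun p => c p.1) := by
  intro p
  have key : ∀ q, Relation.ReflTransGen
      (fun a b : V × Fin t => (strongProd G (⊤ : SimpleGraph (Fin t))).Adj a b ∧
        c a.1 = c b.1) p q →
      Relation.ReflTransGen (fun a b => G.Adj a b ∧ c a = c b) p.1 q.1 := by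
    intro q hq
    induction hq with
    | refl => exact Relation.ReflTransGen.refl
    | tail h1 h2 ih =>
      rcases h2 with ⟨hadj, hcol⟩
      rcases hadj with ⟨heq, _⟩ | ⟨hadj, _⟩ | ⟨hadj, _⟩
      · exact heq ▸ ih
      · exact ih.tail ⟨hadj, hcol⟩
      · exact ih.tail ⟨hadj, hcol⟩
  have hsub : {q | Relation.ReflTransGen
      (fun a b : V × Fin t => (strongProd G (⊤ : SimpleGraph (Fin t))).Adj a b ∧
        c a.1 = c b.1) p q}
      ⊆ {w | Relation.ReflTransGen (fun a b => G.Adj a b ∧ c a = c b) p.1 w} ×ˢ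
        (Set.univ : Set (Fin t)) := fun q hq => ⟨key q hq, trivial⟩
  have h1 := Set.ncard_le_ncard hsub (Set.toFinite _)
  have h2 : ({w | Relation.ReflTransGen (fun a b => G.Adj a b ∧ c a = c b) p.1 w} ×ˢ
      (Set.univ : Set (Fin t))).ncard
      = ({w | Relation.ReflTransGen (fun a b => G.Adj a b ∧ c a = c b) p.1 w}).ncard * t := by
    rw [← Nat.card_coe_set_eq, Nat.card_congr (Equiv.Set.prod _ _), Nat.card_prod,
      Nat.card_coe_set_eq, Nat.card_coe_set_eq, Set.ncard_univ,
      Nat.card_eq_fintype_card, Fintype.card_fin]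
  exact h1.trans (h2 ▸ Nat.mul_le_mul_right t (hc p.1))


lemma chrom_eq_clustered_one {V : Type*} [Fintype V] (G : SimpleGraph V) :
    chromNum G = clusteredChromaticNumber G 1 := by
  unfold chromNum clusteredChromaticNumber
  congr 1
  ext n
  constructor
  · rintro ⟨c, hc⟩
    refine ⟨c, fun v => ?_⟩
    have hset : {w | Relation.ReflTransGen (fun a b => G.Adj a b ∧ c a = c b) v w}
        = {v} := by
      ext w
      simp only [Set.mem_setOf_eq, Set.mem_singleton_iff]
      constructor
      · intro hw
        induction hw with
        | refl => rfl
        | tail _ h2 ih => exact absurd h2.2 (hc _ _ h2.1)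
      · rintro rfl; exact Relation.ReflTransGen.refl
    rw [hset, Set.ncard_singleton]
  · rintro ⟨c, hc⟩
    refine ⟨c, fun u v hadj hcol => ?_⟩
    have hsub : ({u, v} : Set V) ⊆
        {w | Relation.ReflTransGen (fun a b => G.Adj a b ∧ c a = c b) u w} := by
      rintro w (rfl | rfl)
      · exact Relation.ReflTransGen.refl
      · exact Relation.ReflTransGen.single ⟨hadj, hcol⟩
    have h2 := Set.ncard_le_ncard hsub (Set.toFinite _)
    rw [Set.ncard_pair hadj.ne] at h2
    exact absurd (h2.trans (hc u)) (by norm_num)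

lemma main_eq {V : Type*} [Fintype V] (G : SimpleGraph V) (t l : ℕ) (ht : 0 < t) :
    clusteredChromaticNumber G l =
      clusteredChromaticNumber (strongProd G (⊤ : SimpleGraph (Fin t))) (l * t) := by
  unfold clusteredChromaticNumber
  congr 1
  ext n
  constructor
  · rintro ⟨c, hc⟩
    exact ⟨fun p => c p.1, easy hc⟩
  · rintro ⟨c', hc'⟩
    exact hard ht hc'

end Stmt19Aux

open ImproperPaper in

theorem stmt_19 {V : Type*} [Fintype V] (G : SimpleGraph V) (t l : ℕ) (ht : 0 < t)
    (hl : 0 < l) :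
    clusteredChromaticNumber G l =
        clusteredChromaticNumber (strongProd G (⊤ : SimpleGraph (Fin t))) (l * t) ∧
      chromNum G = clusteredChromaticNumber (strongProd G (⊤ : SimpleGraph (Fin t))) t := by
  refine ⟨Stmt19Aux.main_eq G t l ht, ?_⟩
  rw [Stmt19Aux.chrom_eq_clustered_one, Stmt19Aux.main_eq G t 1 ht, one_mul]
end
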